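/- arXiv:2109.00786 — 4 statements merged into one kernel-verified Lean document; each statement's English description precedes it below -/
import Mathlib

section
/- Two noncommutative polynomials f = Σ_w f_w w and g = Σ_w g_w w in ℝ⟨x⟩ are cyclically equivalent if and only if for every word v one has Σ_{w ∼cyc v} f_w = Σ_{w ∼cyc v} g_w, where the sums range over all words w cyclically equivalent to v. -/
open scoped Matrix

/-- `ℝ⟨x₁,…,xₙ⟩`: noncommutative polynomials with real coefficients in `n`
noncommuting letters, realized as the monoid algebra of the free monoid on `Fin n`. -/
abbrev NCPoly (n : ℕ) : Type := MonoidAlgebra ℝ (FreeMonoid (Fin n))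

/-- The canonical involution `f ↦ f⋆` on `ℝ⟨x⟩`: it fixes `ℝ` and each letter `xᵢ`
and reverses words. -/
noncomputable def ncStar {n : ℕ} (f : NCPoly n) : NCPoly n :=
  MonoidAlgebra.ofCoeff (Finsupp.mapDomain FreeMonoid.reverse f.coeff)

/-- `degLE f d`: the nc polynomial `f` has degree at most `d`. -/
def degLE {n : ℕ} (f : NCPoly n) (d : ℕ) : Prop :=
  ∀ w ∈ f.coeff.support, FreeMonoid.length w ≤ d

/-- The `i`-th letter `xᵢ` as an nc polynomial. -/
noncomputable def ncX {n : ℕ} (i : Fin n) : NCPoly n :=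
  MonoidAlgebra.of ℝ (FreeMonoid (Fin n)) (FreeMonoid.of i)

/-- A word `w` viewed as an nc polynomial (the monomial `w` with coefficient `1`). -/
noncomputable def ncWord {n : ℕ} (w : FreeMonoid (Fin n)) : NCPoly n :=
  MonoidAlgebra.of ℝ (FreeMonoid (Fin n)) w

/-- Evaluation of an nc polynomial at a tuple `A = (A₁,…,Aₙ)` of square matrices:
the algebra homomorphism `ℝ⟨x⟩ → ℝ^{r×r}` sending `xᵢ` to `Aᵢ`. -/
noncomputable def ncEval {n r : ℕ} (A : Fin n → Matrix (Fin r) (Fin r) ℝ) :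
    NCPoly n →ₐ[ℝ] Matrix (Fin r) (Fin r) ℝ :=
  MonoidAlgebra.lift ℝ _ (FreeMonoid (Fin n)) (FreeMonoid.lift A)

/-- The cone `Σ` of sums of Hermitian squares `Σᵢ gᵢ⋆ gᵢ`. -/
def SOHS (n : ℕ) : Set (NCPoly n) :=
  { f | ∃ (k : ℕ) (g : Fin k → NCPoly n), f = ∑ i, ncStar (g i) * g i }

/-- The truncated cone `Σ_{2d}`: sums of Hermitian squares `Σᵢ gᵢ⋆ gᵢ` with `deg gᵢ ≤ d`. -/
def SOHSdeg (n d : ℕ) : Set (NCPoly n) :=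
  { f | ∃ (k : ℕ) (g : Fin k → NCPoly n), (∀ i, degLE (g i) d) ∧ f = ∑ i, ncStar (g i) * g i }

/-- `f ∼cyc g`: `f - g` is a finite sum of commutators. -/
def cycEq {n : ℕ} (f g : NCPoly n) : Prop :=
  ∃ (k : ℕ) (p q : Fin k → NCPoly n), f - g = ∑ i, (p i * q i - q i * p i)

/-- `Θ`: nc polynomials cyclically equivalent to a sum of Hermitian squares. -/
def Theta (n : ℕ) : Set (NCPoly n) :=
  { f | ∃ σ ∈ SOHS n, cycEq f σ }

/-- The quadratic module `Q(𝔤)` generated by a finite set `G` of nc polynomials: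
all finite sums `Σᵢ pᵢ⋆ gᵢ pᵢ` with `gᵢ ∈ G ∪ {1}`. -/
def QModule {n : ℕ} (G : Finset (NCPoly n)) : Set (NCPoly n) :=
  { f | ∃ (k : ℕ) (g p : Fin k → NCPoly n),
      (∀ i, g i ∈ (G : Set (NCPoly n)) ∪ {1}) ∧ f = ∑ i, ncStar (p i) * g i * p i }

/-- Words of degree (length) at most `d` in `n` letters. -/
def WordLE (n d : ℕ) : Type := { w : FreeMonoid (Fin n) // FreeMonoid.length w ≤ d }

noncomputable instance (n d : ℕ) : Fintype (WordLE n d) := by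
  have h : {l : List (Fin n) | l.length ≤ d}.Finite := List.finite_length_le (Fin n) d
  have : Finite (WordLE n d) := h.to_subtype
  exact Fintype.ofFinite _

instance (n d : ℕ) : DecidableEq (WordLE n d) := by
  unfold WordLE FreeMonoid; exact inferInstance

/-- Two words are cyclically equivalent iff one is a cyclic rotation of the other. -/
def wordCycEq {n : ℕ} (u v : FreeMonoid (Fin n)) : Prop :=
  ∃ w₁ w₂ : FreeMonoid (Fin n), u = w₁ * w₂ ∧ v = w₂ * w₁

section CycAux
open FreeMonoid

variable {n : ℕ}

lemma wordCycEq_iff_isRotated (u v : FreeMonoid (Fin n)) :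
    wordCycEq u v ↔ u.toList ~r v.toList := by
  constructor
  · rintro ⟨w₁, w₂, rfl, rfl⟩
    exact List.isRotated_append
  · rintro ⟨k, hk⟩
    refine ⟨ofList (u.toList.take (k % u.toList.length)),
            ofList (u.toList.drop (k % u.toList.length)), ?_, ?_⟩
    · have : u.toList = u.toList.take (k % u.toList.length) ++ u.toList.drop (k % u.toList.length) :=
        (List.take_append_drop _ _).symm
      exact congrArg ofList this
    · have : v.toList = u.toList.drop (k % u.toList.length) ++ u.toList.take (k % u.toList.length) := by
        rw [← hk, List.rotate_eq_drop_append_take_mod]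
      exact congrArg ofList this

lemma wordCycEq_refl (u : FreeMonoid (Fin n)) : wordCycEq u u :=
  (wordCycEq_iff_isRotated u u).2 (List.IsRotated.refl _)

lemma wordCycEq_symm {u v : FreeMonoid (Fin n)} (h : wordCycEq u v) : wordCycEq v u :=
  (wordCycEq_iff_isRotated v u).2 ((wordCycEq_iff_isRotated u v).1 h).symm

lemma wordCycEq_trans {u v w : FreeMonoid (Fin n)} (h : wordCycEq u v) (h' : wordCycEq v w) :
    wordCycEq u w :=
  (wordCycEq_iff_isRotated u w).2
    (((wordCycEq_iff_isRotated u v).1 h).trans ((wordCycEq_iff_isRotated v w).1 h'))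

/-- Canonical representative of the cyclic equivalence class of a word. -/
noncomputable def cycRep (w : FreeMonoid (Fin n)) : FreeMonoid (Fin n) :=
  ofList (Quotient.mk (List.IsRotated.setoid (Fin n)) w.toList).out

lemma cycRep_rel (w : FreeMonoid (Fin n)) : wordCycEq (cycRep w) w :=
  (wordCycEq_iff_isRotated _ _).2 (@Quotient.mk_out _ (List.IsRotated.setoid (Fin n)) w.toList)

lemma cycRep_eq_of_rel {u v : FreeMonoid (Fin n)} (h : wordCycEq u v) : cycRep u = cycRep v :=
  congrArg (fun q => ofList (Quotient.out q))
    (Quotient.sound ((wordCycEq_iff_isRotated u v).1 h))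

lemma cycRep_idem (w : FreeMonoid (Fin n)) : cycRep (cycRep w) = cycRep w :=
  cycRep_eq_of_rel (cycRep_rel w)

lemma wordCycEq_iff_cycRep_eq {u v : FreeMonoid (Fin n)} :
    wordCycEq u v ↔ cycRep u = cycRep v := by
  constructor
  · exact cycRep_eq_of_rel
  · intro h
    exact wordCycEq_trans (wordCycEq_symm (cycRep_rel u)) (h ▸ cycRep_rel v)

end CycAux

section PolyAux
open Finsupp
variable {n : ℕ}

/-- The span of commutators. -/
noncomputable def commSpan (n : ℕ) : Submodule ℝ (NCPoly n) :=
  Submodule.span ℝ {x | ∃ p q : NCPoly n, x = p * q - q * p}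

lemma exists_sum_of_mem_commSpan {x : NCPoly n} (h : x ∈ commSpan n) :
    ∃ (k : ℕ) (p q : Fin k → NCPoly n), x = ∑ i, (p i * q i - q i * p i) := by
  induction h using Submodule.span_induction with
  | mem x hx =>
    obtain ⟨p, q, rfl⟩ := hx
    exact ⟨1, fun _ => p, fun _ => q, by simp⟩
  | zero => exact ⟨0, ![], ![], by simp⟩
  | add x y hx hy ihx ihy =>
    obtain ⟨k₁, p₁, q₁, h₁⟩ := ihx
    obtain ⟨k₂, p₂, q₂, h₂⟩ := ihy
    refine ⟨k₁ + k₂, Fin.append p₁ p₂, Fin.append q₁ q₂, ?_⟩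
    rw [Fin.sum_univ_add]
    simp only [Fin.append_left, Fin.append_right]
    rw [← h₁, ← h₂]
  | smul a x hx ihx =>
    obtain ⟨k, p, q, hpq⟩ := ihx
    refine ⟨k, fun i => a • p i, q, ?_⟩
    rw [hpq, Finset.smul_sum]
    congr 1; ext i
    rw [smul_sub, smul_mul_assoc, mul_smul_comm]

lemma cycEq_iff_mem_commSpan (f g : NCPoly n) : cycEq f g ↔ f - g ∈ commSpan n := by
  constructor
  · rintro ⟨k, p, q, h⟩
    rw [h]
    exact Submodule.sum_mem _ fun i _ =>
      Submodule.subset_span ⟨p i, q i, rfl⟩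
  · exact exists_sum_of_mem_commSpan

/-- The linear projection summing coefficients over cyclic classes. -/
noncomputable def cycProj (n : ℕ) : NCPoly n →ₗ[ℝ] NCPoly n :=
  MonoidAlgebra.mapDomainLinearMap ℝ ℝ cycRep

lemma cycProj_single (w : FreeMonoid (Fin n)) (c : ℝ) :
    cycProj n (MonoidAlgebra.single w c) = MonoidAlgebra.single (cycRep w) c :=
  MonoidAlgebra.mapDomainLinearMap_single _ _ _

lemma cycProj_mul_comm (p q : NCPoly n) : cycProj n (p * q) = cycProj n (q * p) := by
  rw [MonoidAlgebra.mul_def, MonoidAlgebra.mul_def]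
  rw [Finsupp.sum, Finsupp.sum]
  simp only [Finsupp.sum, map_sum]
  rw [Finset.sum_comm]
  refine Finset.sum_congr rfl fun v _ => Finset.sum_congr rfl fun u _ => ?_
  rw [cycProj_single, cycProj_single, mul_comm]
  congr 1
  exact cycRep_eq_of_rel ⟨u, v, rfl, rfl⟩

lemma sub_cycProj_mem (h : NCPoly n) : h - cycProj n h ∈ commSpan n := by
  classical
  have h1 : h = ∑ w ∈ h.coeff.support, MonoidAlgebra.single w (h.coeff w) := by
    conv_lhs => rw [← MonoidAlgebra.sum_coeff_single h]
    rfl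
  have h2 : cycProj n h = ∑ w ∈ h.coeff.support, MonoidAlgebra.single (cycRep w) (h.coeff w) := by
    conv_lhs => rw [h1]
    rw [map_sum]
    exact Finset.sum_congr rfl fun w _ => cycProj_single w (h.coeff w)
  have h3 : h - cycProj n h = ∑ w ∈ h.coeff.support,
      (MonoidAlgebra.single w (h.coeff w) - MonoidAlgebra.single (cycRep w) (h.coeff w)) := by
    rw [Finset.sum_sub_distrib, ← h2, ← h1]
  rw [h3]
  refine Submodule.sum_mem _ fun w _ => ?_
  obtain ⟨w₁, w₂, hw, hw'⟩ := wordCycEq_symm (cycRep_rel w)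
  refine Submodule.subset_span ⟨MonoidAlgebra.single w₁ (h.coeff w), MonoidAlgebra.single w₂ 1, ?_⟩
  rw [MonoidAlgebra.single_mul_single, MonoidAlgebra.single_mul_single, mul_one, one_mul,
    ← hw, ← hw']

lemma cycProj_eq_zero_of_mem {x : NCPoly n} (hx : x ∈ commSpan n) : cycProj n x = 0 := by
  induction hx using Submodule.span_induction with
  | mem x hx =>
    obtain ⟨p, q, rfl⟩ := hx
    rw [map_sub, cycProj_mul_comm, sub_self]
  | zero => exact map_zero _
  | add x y hx hy ihx ihy => rw [map_add, ihx, ihy, add_zero]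
  | smul a x hx ihx => rw [map_smul, ihx, smul_zero]

lemma mem_commSpan_iff_cycProj (x : NCPoly n) : x ∈ commSpan n ↔ cycProj n x = 0 := by
  refine ⟨cycProj_eq_zero_of_mem, fun h => ?_⟩
  have := sub_cycProj_mem x
  rwa [h, sub_zero] at this

end PolyAux

section FinalAux
variable {n : ℕ}

open Classical in
lemma cycProj_apply (f : NCPoly n) (b : FreeMonoid (Fin n)) :
    (cycProj n f).coeff b = ∑ w ∈ f.coeff.support.filter (fun w => cycRep w = b), f.coeff w := by
  classical
  have : (cycProj n f).coeff = Finsupp.mapDomain cycRep f.coeff := rfl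
  rw [this, Finsupp.mapDomain, Finsupp.sum_apply, Finsupp.sum, Finset.sum_filter]
  exact Finset.sum_congr rfl fun w _ => by rw [Finsupp.single_apply]

open Classical in
lemma cyc_sum_eq (f : NCPoly n) (v : FreeMonoid (Fin n)) :
    (∑ w ∈ f.coeff.support.filter (fun w => wordCycEq w v), f.coeff w) = (cycProj n f).coeff (cycRep v) := by
  classical
  rw [cycProj_apply]
  congr 1
  apply Finset.filter_congr
  intro w _
  exact wordCycEq_iff_cycRep_eq

open Classical in
lemma cycProj_eq_iff (f g : NCPoly n) :
    cycProj n f = cycProj n g ↔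
      ∀ v : FreeMonoid (Fin n),
        (∑ w ∈ f.coeff.support.filter (fun w => wordCycEq w v), f.coeff w) =
        (∑ w ∈ g.coeff.support.filter (fun w => wordCycEq w v), g.coeff w) := by
  classical
  constructor
  · intro h v
    rw [cyc_sum_eq, cyc_sum_eq, h]
  · intro h
    ext b
    by_cases hb : cycRep b = b
    · have := h b
      rw [cyc_sum_eq, cyc_sum_eq, hb] at this
      exact this
    · have hempty : ∀ (f : NCPoly n),
          f.coeff.support.filter (fun w => cycRep w = b) = ∅ := by
        intro f
        apply Finset.filter_false_of_mem
        intro w _ hw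
        exact hb (by rw [← hw, cycRep_idem, hw])
      rw [cycProj_apply, cycProj_apply, hempty f, hempty g]
      simp

open Classical in
/-- `f ∼cyc g` iff for every word `v`, the sums of the coefficients of `f`
resp. `g` over all words cyclically equivalent to `v` agree. -/
theorem cycEq_iff_cyclic_coeff_sums {n : ℕ} (f g : NCPoly n) :
    cycEq f g ↔
      ∀ v : FreeMonoid (Fin n),
        (∑ w ∈ f.coeff.support.filter (fun w => wordCycEq w v), f.coeff w) =
        (∑ w ∈ g.coeff.support.filter (fun w => wordCycEq w v), g.coeff w) := by
  rw [cycEq_iff_mem_commSpan, mem_commSpan_iff_cycProj, map_sub, sub_eq_zero]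
  exact cycProj_eq_iff f g
end FinalAux
end

section
/- For no τ ∈ ℝ is M_nc − τ cyclically equivalent to a sum of Hermitian squares, where M_nc(x,y) = x y⁴ x + y x⁴ y − 3 x y² x + 1 ∈ ℝ⟨x,y⟩; that is, M_nc − τ ∉ Θ for every τ ∈ ℝ. -/
open scoped Matrix

/-- The noncommutative Motzkin polynomial `M_nc(x,y) = x y⁴ x + y x⁴ y - 3 x y² x + 1`. -/
noncomputable def Mnc : NCPoly 2 :=
  ncX 0 * ncX 1 ^ 4 * ncX 0 + ncX 1 * ncX 0 ^ 4 * ncX 1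
    - (3 : ℝ) • (ncX 0 * ncX 1 ^ 2 * ncX 0) + 1


/-! ### Auxiliary machinery for the proof -/

namespace MncAux

open FreeMonoid MonoidAlgebra

abbrev Wd := FreeMonoid (Fin 2)

instance : DecidableEq Wd := by
  unfold Wd FreeMonoid; exact inferInstance

/-- The linear functional `f ↦ ∑ w, f w * c w`. -/
noncomputable def Lc (c : Wd → ℝ) : NCPoly 2 →ₗ[ℝ] ℝ :=
  (Finsupp.linearCombination ℝ c).comp (MonoidAlgebra.coeffLinearEquiv ℝ).toLinearMap

lemma Lc_single (c : Wd → ℝ) (m : Wd) (r : ℝ) :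
    Lc c (MonoidAlgebra.single m r) = r * c m := by
  show (Finsupp.linearCombination ℝ c) (Finsupp.single m r) = r * c m
  rw [show ((Finsupp.linearCombination ℝ c) (Finsupp.single m r)) = r • c m from
    Finsupp.linearCombination_single ℝ r m]
  exact smul_eq_mul r (c m)

lemma Lc_mul (c : Wd → ℝ) (p q : NCPoly 2) :
    Lc c (p * q) = p.coeff.sum fun u a => q.coeff.sum fun v b => a * b * c (u * v) := by
  rw [MonoidAlgebra.mul_def, map_finsuppSum]
  refine Finsupp.sum_congr fun u hu => ?_
  rw [map_finsuppSum]
  refine Finsupp.sum_congr fun v hv => ?_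
  rw [Lc_single]

lemma Lc_comm (c : Wd → ℝ) (hc : ∀ u v : Wd, c (u * v) = c (v * u)) (p q : NCPoly 2) :
    Lc c (p * q - q * p) = 0 := by
  rw [map_sub, Lc_mul, Lc_mul, Finsupp.sum_comm, sub_eq_zero]
  refine Finsupp.sum_congr fun u hu => Finsupp.sum_congr fun v hv => ?_
  rw [hc]; ring

lemma Lc_sq (c : Wd → ℝ) (g : NCPoly 2) :
    Lc c (ncStar g * g) = g.coeff.sum fun u a => g.coeff.sum fun v b => a * b * c (u.reverse * v) := by
  rw [Lc_mul]
  unfold ncStar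
  rw [MonoidAlgebra.coeff_ofCoeff, Finsupp.sum_mapDomain_index]
  · intro b
    simp
  · intro b m₁ m₂
    rw [← Finsupp.sum_add]
    refine Finsupp.sum_congr fun v hv => ?_
    ring

def wXY : Wd := ofList [0,1,1,1,1,0]
def wYX : Wd := ofList [1,0,0,0,0,1]
def wXYYX : Wd := ofList [0,1,1,0]

lemma Mnc_eq : Mnc = MonoidAlgebra.single wXY 1 + MonoidAlgebra.single wYX 1
    - MonoidAlgebra.single wXYYX 3 + MonoidAlgebra.single 1 1 := by
  unfold Mnc ncX
  rw [MonoidAlgebra.of_apply, MonoidAlgebra.of_apply]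
  simp only [MonoidAlgebra.single_pow, MonoidAlgebra.single_mul_single, one_pow, one_mul,
    MonoidAlgebra.smul_single', MonoidAlgebra.one_def]
  norm_num
  rfl

lemma master (τ : ℝ) {k : ℕ} (g : Fin k → NCPoly 2) {m : ℕ} (p q : Fin m → NCPoly 2)
    (h : Mnc - τ • 1 - (∑ i, ncStar (g i) * g i) = ∑ j, (p j * q j - q j * p j))
    (c : Wd → ℝ) (hc : ∀ u v : Wd, c (u * v) = c (v * u)) :
    c wXY + c wYX - 3 * c wXYYX + (1 - τ) * c 1
      = ∑ i, (g i).coeff.sum fun u a => (g i).coeff.sum fun v b => a * b * c (u.reverse * v) := by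
  have h1 := congrArg (Lc c) h
  rw [map_sub, map_sum, map_sum] at h1
  rw [Finset.sum_eq_zero (fun j _ => Lc_comm c hc (p j) (q j)), sub_eq_zero] at h1
  have h2 : Lc c (Mnc - τ • 1) = c wXY + c wYX - 3 * c wXYYX + (1 - τ) * c 1 := by
    have hτ : τ • (1 : NCPoly 2) = MonoidAlgebra.single 1 τ := by
      rw [MonoidAlgebra.one_def, MonoidAlgebra.smul_single', mul_one]
    rw [Mnc_eq, hτ, map_sub, map_add, map_sub, map_add, Lc_single, Lc_single, Lc_single,
      Lc_single, Lc_single]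
    ring
  rw [h2] at h1
  rw [h1]
  exact Finset.sum_congr rfl fun i _ => Lc_sq c (g i)

/-! ### Counting lemmas for words over `Fin 2` -/

lemma count_fin2 (l : List (Fin 2)) : l.count 0 + l.count 1 = l.length := by
  induction l with
  | nil => rfl
  | cons a t ih =>
    fin_cases a <;> simp [List.count_cons] <;> omega

lemma count_le_len (l : List (Fin 2)) (j : Fin 2) : l.count j ≤ l.length :=
  List.count_le_length

lemma fin2_cases (b : Fin 2) : b = 0 ∨ b = 1 := by revert b; decide

lemma eq_rep0 {n : ℕ} (l : List (Fin 2)) (h0 : l.count 0 = n) (h1 : l.count 1 = 0) :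
    l = List.replicate n 0 := by
  rw [List.eq_replicate_iff]
  constructor
  · rw [← count_fin2, h0, h1]
    omega
  · intro b hb
    rcases fin2_cases b with h | h
    · exact h
    · exfalso
      subst h
      have := List.count_pos_iff.2 hb
      omega

lemma eq_rep1 {n : ℕ} (l : List (Fin 2)) (h0 : l.count 0 = 0) (h1 : l.count 1 = n) :
    l = List.replicate n 1 := by
  rw [List.eq_replicate_iff]
  constructor
  · rw [← count_fin2, h0, h1]
    omega
  · intro b hb
    rcases fin2_cases b with h | h
    · exfalso
      subst h
      have := List.count_pos_iff.2 hb
      omega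
    · exact h

lemma eq_11 (l : List (Fin 2)) (h0 : l.count 0 = 1) (h1 : l.count 1 = 1) :
    l = [0, 1] ∨ l = [1, 0] := by
  have hl : l.length = 2 := by rw [← count_fin2]; omega
  rcases l with _ | ⟨a, _ | ⟨b, _ | ⟨cc, t⟩⟩⟩ <;> simp_all
  fin_cases a <;> fin_cases b <;> simp_all [List.count_cons]

/-! ### Summation helpers -/

lemma square_eq (g : NCPoly 2) (c d : Wd → ℝ)
    (h : ∀ u v : Wd, g.coeff u ≠ 0 → g.coeff v ≠ 0 → c (u.reverse * v) = d u * d v) :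
    (g.coeff.sum fun u a => g.coeff.sum fun v b => a * b * c (u.reverse * v))
      = (g.coeff.sum fun u a => a * d u) ^ 2 := by
  rw [sq, Finsupp.sum, Finsupp.sum, Finset.sum_mul_sum]
  refine Finset.sum_congr rfl fun u hu => ?_
  rw [Finsupp.sum]
  refine Finset.sum_congr rfl fun v hv => ?_
  rw [h u v (Finsupp.mem_support_iff.1 hu) (Finsupp.mem_support_iff.1 hv)]
  ring

lemma lin_single (g : NCPoly 2) (t : Wd) :
    (g.coeff.sum fun u a => a * (if u = t then (1:ℝ) else 0)) = g.coeff t := by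
  rw [Finsupp.sum]
  rw [show (∑ u ∈ g.coeff.support, g.coeff u * (if u = t then (1:ℝ) else 0))
      = ∑ u ∈ g.coeff.support, (if u = t then g.coeff u else 0) from
    Finset.sum_congr rfl fun u _ => by by_cases h : u = t <;> simp [h]]
  rw [Finset.sum_ite_eq' g.coeff.support t (fun u => g.coeff u)]
  by_cases h : t ∈ g.coeff.support
  · rw [if_pos h]
  · rw [if_neg h, Finsupp.notMem_support_iff.1 h]

lemma lin_pair (g : NCPoly 2) (s t : Wd) (hst : s ≠ t) :
    (g.coeff.sum fun u a => a * (if u = s ∨ u = t then (1:ℝ) else 0)) = g.coeff s + g.coeff t := by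
  rw [show (fun u a => a * (if u = s ∨ u = t then (1:ℝ) else 0))
      = fun u (a : ℝ) => a * (if u = s then (1:ℝ) else 0) + a * (if u = t then (1:ℝ) else 0) by
    funext u a
    by_cases h1 : u = s <;> by_cases h2 : u = t <;> simp_all]
  rw [Finsupp.sum_add, lin_single, lin_single]

lemma sq_sum_zero {k : ℕ} (F : Fin k → ℝ) (h : ∑ i, (F i) ^ 2 = 0) : ∀ i, F i = 0 := by
  intro i
  have h1 : ∀ j ∈ Finset.univ, (0:ℝ) ≤ (F j) ^ 2 := fun j _ => sq_nonneg _
  have := (Finset.sum_eq_zero_iff_of_nonneg h1).1 h i (Finset.mem_univ i)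
  exact (pow_eq_zero_iff (by norm_num : (2:ℕ) ≠ 0)).1 this

/-! ### The count-class weights -/

noncomputable def cnt (a b : ℕ) : Wd → ℝ :=
  fun z => if (toList z).count 0 = a ∧ (toList z).count 1 = b then 1 else 0

lemma cnt_cyc (a b : ℕ) (u v : Wd) : cnt a b (u * v) = cnt a b (v * u) := by
  unfold cnt
  simp only [toList_mul, List.count_append]
  exact if_congr (by constructor <;> intro h <;> omega) rfl rfl

lemma count_revmul (u v : Wd) (j : Fin 2) :
    (toList (u.reverse * v)).count j = (toList u).count j + (toList v).count j := by
  rw [toList_mul, List.count_append]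
  congr 1
  have h : toList (u.reverse) = (toList u).reverse := rfl
  rw [h, List.count_reverse]

lemma cnt_revmul (a b : ℕ) (u v : Wd) :
    cnt a b (u.reverse * v)
      = if (toList u).count 0 + (toList v).count 0 = a ∧
            (toList u).count 1 + (toList v).count 1 = b then (1:ℝ) else 0 := by
  unfold cnt
  rw [count_revmul, count_revmul]

def wX : Wd := ofList [0]
def wY : Wd := ofList [1]
def wX2 : Wd := ofList [0,0]
def wY2 : Wd := ofList [1,1]
def wX3 : Wd := ofList [0,0,0]
def wY3 : Wd := ofList [1,1,1]
def wAB : Wd := ofList [0,1]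
def wBA : Wd := ofList [1,0]

lemma eq_ofList_iff (u : Wd) (l : List (Fin 2)) : u = ofList l ↔ toList u = l := by
  constructor
  · rintro rfl; rfl
  · intro h
    exact toList.injective (by rw [h]; rfl)

lemma eq_wX_iff (u : Wd) : u = wX ↔ toList u = [0] :=
  eq_ofList_iff u [0]

lemma eq_wY_iff (u : Wd) : u = wY ↔ toList u = [1] :=
  eq_ofList_iff u [1]

lemma eq_wX2_iff (u : Wd) : u = wX2 ↔ toList u = [0,0] :=
  eq_ofList_iff u [0,0]

lemma eq_wY2_iff (u : Wd) : u = wY2 ↔ toList u = [1,1] :=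
  eq_ofList_iff u [1,1]

lemma eq_wX3_iff (u : Wd) : u = wX3 ↔ toList u = [0,0,0] :=
  eq_ofList_iff u [0,0,0]

lemma eq_wY3_iff (u : Wd) : u = wY3 ↔ toList u = [1,1,1] :=
  eq_ofList_iff u [1,1,1]

lemma eq_wAB_iff (u : Wd) : u = wAB ↔ toList u = [0,1] :=
  eq_ofList_iff u [0,1]

lemma eq_wBA_iff (u : Wd) : u = wBA ↔ toList u = [1,0] :=
  eq_ofList_iff u [1,0]

/-! ### Classification of the class equations -/

section Classify

variable (g : NCPoly 2) (hlen : ∀ w : Wd, g.coeff w ≠ 0 → (toList w).length ≤ 3)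

lemma class60 (hlen : ∀ w : Wd, g.coeff w ≠ 0 → (toList w).length ≤ 3) :
    ∀ u v : Wd, g.coeff u ≠ 0 → g.coeff v ≠ 0 →
      cnt 6 0 (u.reverse * v)
        = (if u = wX3 then (1:ℝ) else 0) * (if v = wX3 then (1:ℝ) else 0) := by
  intro u v hu hv
  rw [cnt_revmul]
  by_cases h : (toList u).count 0 + (toList v).count 0 = 6 ∧
      (toList u).count 1 + (toList v).count 1 = 0
  · rw [if_pos h]
    have lu := hlen u hu
    have lv := hlen v hv
    have c0u := count_le_len (toList u) 0
    have c0v := count_le_len (toList v) 0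
    have hu3 : u = wX3 := by
      rw [eq_wX3_iff]
      have : toList u = List.replicate 3 0 := eq_rep0 _ (by omega) (by omega)
      rw [this]; rfl
    have hv3 : v = wX3 := by
      rw [eq_wX3_iff]
      have : toList v = List.replicate 3 0 := eq_rep0 _ (by omega) (by omega)
      rw [this]; rfl
    rw [if_pos hu3, if_pos hv3]; norm_num
  · rw [if_neg h]
    by_cases hu3 : u = wX3
    · by_cases hv3 : v = wX3
      · exact absurd (by subst hu3; subst hv3; exact ⟨by decide, by decide⟩) h
      · rw [if_neg hv3, mul_zero]
    · rw [if_neg hu3, zero_mul]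

lemma class06 (hlen : ∀ w : Wd, g.coeff w ≠ 0 → (toList w).length ≤ 3) :
    ∀ u v : Wd, g.coeff u ≠ 0 → g.coeff v ≠ 0 →
      cnt 0 6 (u.reverse * v)
        = (if u = wY3 then (1:ℝ) else 0) * (if v = wY3 then (1:ℝ) else 0) := by
  intro u v hu hv
  rw [cnt_revmul]
  by_cases h : (toList u).count 0 + (toList v).count 0 = 0 ∧
      (toList u).count 1 + (toList v).count 1 = 6
  · rw [if_pos h]
    have lu := hlen u hu
    have lv := hlen v hv
    have c0u := count_le_len (toList u) 1
    have c0v := count_le_len (toList v) 1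
    have hu3 : u = wY3 := by
      rw [eq_wY3_iff]
      have : toList u = List.replicate 3 1 := eq_rep1 _ (by omega) (by omega)
      rw [this]; rfl
    have hv3 : v = wY3 := by
      rw [eq_wY3_iff]
      have : toList v = List.replicate 3 1 := eq_rep1 _ (by omega) (by omega)
      rw [this]; rfl
    rw [if_pos hu3, if_pos hv3]; norm_num
  · rw [if_neg h]
    by_cases hu3 : u = wY3
    · by_cases hv3 : v = wY3
      · exact absurd (by subst hu3; subst hv3; exact ⟨by decide, by decide⟩) h
      · rw [if_neg hv3, mul_zero]
    · rw [if_neg hu3, zero_mul]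

lemma class40 (hlen : ∀ w : Wd, g.coeff w ≠ 0 → (toList w).length ≤ 3) (hx3 : g.coeff wX3 = 0) :
    ∀ u v : Wd, g.coeff u ≠ 0 → g.coeff v ≠ 0 →
      cnt 4 0 (u.reverse * v)
        = (if u = wX2 then (1:ℝ) else 0) * (if v = wX2 then (1:ℝ) else 0) := by
  intro u v hu hv
  rw [cnt_revmul]
  by_cases h : (toList u).count 0 + (toList v).count 0 = 4 ∧
      (toList u).count 1 + (toList v).count 1 = 0
  · rw [if_pos h]
    have lu := hlen u hu
    have lv := hlen v hv
    have c0u := count_le_len (toList u) 0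
    have c0v := count_le_len (toList v) 0
    have hcase : (toList u).count 0 = 1 ∨ (toList u).count 0 = 2 ∨ (toList u).count 0 = 3 := by
      omega
    rcases hcase with h1 | h2 | h3
    · exfalso
      apply hv
      have : v = wX3 := by
        rw [eq_wX3_iff]
        have : toList v = List.replicate 3 0 := eq_rep0 _ (by omega) (by omega)
        rw [this]; rfl
      rw [this]; exact hx3
    · have hu2 : u = wX2 := by
        rw [eq_wX2_iff]
        have : toList u = List.replicate 2 0 := eq_rep0 _ (by omega) (by omega)
        rw [this]; rfl
      have hv2 : v = wX2 := by
        rw [eq_wX2_iff]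
        have : toList v = List.replicate 2 0 := eq_rep0 _ (by omega) (by omega)
        rw [this]; rfl
      rw [if_pos hu2, if_pos hv2]; norm_num
    · exfalso
      apply hu
      have : u = wX3 := by
        rw [eq_wX3_iff]
        have : toList u = List.replicate 3 0 := eq_rep0 _ (by omega) (by omega)
        rw [this]; rfl
      rw [this]; exact hx3
  · rw [if_neg h]
    by_cases hu2 : u = wX2
    · by_cases hv2 : v = wX2
      · exact absurd (by subst hu2; subst hv2; exact ⟨by decide, by decide⟩) h
      · rw [if_neg hv2, mul_zero]
    · rw [if_neg hu2, zero_mul]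

lemma class04 (hlen : ∀ w : Wd, g.coeff w ≠ 0 → (toList w).length ≤ 3) (hy3 : g.coeff wY3 = 0) :
    ∀ u v : Wd, g.coeff u ≠ 0 → g.coeff v ≠ 0 →
      cnt 0 4 (u.reverse * v)
        = (if u = wY2 then (1:ℝ) else 0) * (if v = wY2 then (1:ℝ) else 0) := by
  intro u v hu hv
  rw [cnt_revmul]
  by_cases h : (toList u).count 0 + (toList v).count 0 = 0 ∧
      (toList u).count 1 + (toList v).count 1 = 4
  · rw [if_pos h]
    have lu := hlen u hu
    have lv := hlen v hv
    have c0u := count_le_len (toList u) 1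
    have c0v := count_le_len (toList v) 1
    have hcase : (toList u).count 1 = 1 ∨ (toList u).count 1 = 2 ∨ (toList u).count 1 = 3 := by
      omega
    rcases hcase with h1 | h2 | h3
    · exfalso
      apply hv
      have : v = wY3 := by
        rw [eq_wY3_iff]
        have : toList v = List.replicate 3 1 := eq_rep1 _ (by omega) (by omega)
        rw [this]; rfl
      rw [this]; exact hy3
    · have hu2 : u = wY2 := by
        rw [eq_wY2_iff]
        have : toList u = List.replicate 2 1 := eq_rep1 _ (by omega) (by omega)
        rw [this]; rfl
      have hv2 : v = wY2 := by
        rw [eq_wY2_iff]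
        have : toList v = List.replicate 2 1 := eq_rep1 _ (by omega) (by omega)
        rw [this]; rfl
      rw [if_pos hu2, if_pos hv2]; norm_num
    · exfalso
      apply hu
      have : u = wY3 := by
        rw [eq_wY3_iff]
        have : toList u = List.replicate 3 1 := eq_rep1 _ (by omega) (by omega)
        rw [this]; rfl
      rw [this]; exact hy3
  · rw [if_neg h]
    by_cases hu2 : u = wY2
    · by_cases hv2 : v = wY2
      · exact absurd (by subst hu2; subst hv2; exact ⟨by decide, by decide⟩) h
      · rw [if_neg hv2, mul_zero]
    · rw [if_neg hu2, zero_mul]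

lemma class20 (hx2 : g.coeff wX2 = 0) :
    ∀ u v : Wd, g.coeff u ≠ 0 → g.coeff v ≠ 0 →
      cnt 2 0 (u.reverse * v)
        = (if u = wX then (1:ℝ) else 0) * (if v = wX then (1:ℝ) else 0) := by
  intro u v hu hv
  rw [cnt_revmul]
  by_cases h : (toList u).count 0 + (toList v).count 0 = 2 ∧
      (toList u).count 1 + (toList v).count 1 = 0
  · rw [if_pos h]
    have hcase : (toList u).count 0 = 0 ∨ (toList u).count 0 = 1 ∨ (toList u).count 0 = 2 := by
      omega
    rcases hcase with h1 | h2 | h3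
    · exfalso
      apply hv
      have : v = wX2 := by
        rw [eq_wX2_iff]
        have : toList v = List.replicate 2 0 := eq_rep0 _ (by omega) (by omega)
        rw [this]; rfl
      rw [this]; exact hx2
    · have hu1 : u = wX := by
        rw [eq_wX_iff]
        have : toList u = List.replicate 1 0 := eq_rep0 _ (by omega) (by omega)
        rw [this]; rfl
      have hv1 : v = wX := by
        rw [eq_wX_iff]
        have : toList v = List.replicate 1 0 := eq_rep0 _ (by omega) (by omega)
        rw [this]; rfl
      rw [if_pos hu1, if_pos hv1]; norm_num
    · exfalso
      apply hu
      have : u = wX2 := by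
        rw [eq_wX2_iff]
        have : toList u = List.replicate 2 0 := eq_rep0 _ (by omega) (by omega)
        rw [this]; rfl
      rw [this]; exact hx2
  · rw [if_neg h]
    by_cases hu1 : u = wX
    · by_cases hv1 : v = wX
      · exact absurd (by subst hu1; subst hv1; exact ⟨by decide, by decide⟩) h
      · rw [if_neg hv1, mul_zero]
    · rw [if_neg hu1, zero_mul]

lemma class02 (hy2 : g.coeff wY2 = 0) :
    ∀ u v : Wd, g.coeff u ≠ 0 → g.coeff v ≠ 0 →
      cnt 0 2 (u.reverse * v)
        = (if u = wY then (1:ℝ) else 0) * (if v = wY then (1:ℝ) else 0) := by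
  intro u v hu hv
  rw [cnt_revmul]
  by_cases h : (toList u).count 0 + (toList v).count 0 = 0 ∧
      (toList u).count 1 + (toList v).count 1 = 2
  · rw [if_pos h]
    have hcase : (toList u).count 1 = 0 ∨ (toList u).count 1 = 1 ∨ (toList u).count 1 = 2 := by
      omega
    rcases hcase with h1 | h2 | h3
    · exfalso
      apply hv
      have : v = wY2 := by
        rw [eq_wY2_iff]
        have : toList v = List.replicate 2 1 := eq_rep1 _ (by omega) (by omega)
        rw [this]; rfl
      rw [this]; exact hy2
    · have hu1 : u = wY := by
        rw [eq_wY_iff]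
        have : toList u = List.replicate 1 1 := eq_rep1 _ (by omega) (by omega)
        rw [this]; rfl
      have hv1 : v = wY := by
        rw [eq_wY_iff]
        have : toList v = List.replicate 1 1 := eq_rep1 _ (by omega) (by omega)
        rw [this]; rfl
      rw [if_pos hu1, if_pos hv1]; norm_num
    · exfalso
      apply hu
      have : u = wY2 := by
        rw [eq_wY2_iff]
        have : toList u = List.replicate 2 1 := eq_rep1 _ (by omega) (by omega)
        rw [this]; rfl
      rw [this]; exact hy2
  · rw [if_neg h]
    by_cases hu1 : u = wY
    · by_cases hv1 : v = wY
      · exact absurd (by subst hu1; subst hv1; exact ⟨by decide, by decide⟩) h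
      · rw [if_neg hv1, mul_zero]
    · rw [if_neg hu1, zero_mul]

lemma class22 (hlen : ∀ w : Wd, g.coeff w ≠ 0 → (toList w).length ≤ 3)
    (hx : g.coeff wX = 0) (hy : g.coeff wY = 0) (hx2 : g.coeff wX2 = 0) (hy2 : g.coeff wY2 = 0) :
    ∀ u v : Wd, g.coeff u ≠ 0 → g.coeff v ≠ 0 →
      cnt 2 2 (u.reverse * v)
        = (if u = wAB ∨ u = wBA then (1:ℝ) else 0)
          * (if v = wAB ∨ v = wBA then (1:ℝ) else 0) := by
  intro u v hu hv
  rw [cnt_revmul]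
  by_cases h : (toList u).count 0 + (toList v).count 0 = 2 ∧
      (toList u).count 1 + (toList v).count 1 = 2
  · rw [if_pos h]
    have lu := hlen u hu
    have lv := hlen v hv
    have hl2u := count_fin2 (toList u)
    have hl2v := count_fin2 (toList v)
    -- eliminate all count patterns except (1,1)
    have hu11 : (toList u).count 0 = 1 ∧ (toList u).count 1 = 1 := by
      by_contra hcon
      rcases h with ⟨h0, h1⟩
      -- case analysis on (count0 u, count1 u)
      have hc0 : (toList u).count 0 ≤ 2 := by omega
      have hc1 : (toList u).count 1 ≤ 2 := by omega
      interval_cases hA : (toList u).count 0 <;> interval_cases hB : (toList u).count 1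
      -- (0,0): u = empty, v has counts (2,2), length 4 > 3
      · omega
      -- (0,1): u = wY
      · exact hu (by
          have : u = wY := by
            rw [eq_wY_iff]
            have : toList u = List.replicate 1 1 := eq_rep1 _ hA hB
            rw [this]; rfl
          rw [this]; exact hy)
      -- (0,2): u = wY2
      · exact hu (by
          have : u = wY2 := by
            rw [eq_wY2_iff]
            have : toList u = List.replicate 2 1 := eq_rep1 _ hA hB
            rw [this]; rfl
          rw [this]; exact hy2)
      -- (1,0): u = wX
      · exact hu (by
          have : u = wX := by
            rw [eq_wX_iff]
            have : toList u = List.replicate 1 0 := eq_rep0 _ hA hB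
            rw [this]; rfl
          rw [this]; exact hx)
      -- (1,1): contradiction with hcon
      · exact hcon ⟨rfl, rfl⟩
      -- (1,2): v has counts (1,0): v = wX
      · exact hv (by
          have : v = wX := by
            rw [eq_wX_iff]
            have : toList v = List.replicate 1 0 := eq_rep0 _ (by omega) (by omega)
            rw [this]; rfl
          rw [this]; exact hx)
      -- (2,0): u = wX2
      · exact hu (by
          have : u = wX2 := by
            rw [eq_wX2_iff]
            have : toList u = List.replicate 2 0 := eq_rep0 _ hA hB
            rw [this]; rfl
          rw [this]; exact hx2)
      -- (2,1): v has counts (0,1): v = wY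
      · exact hv (by
          have : v = wY := by
            rw [eq_wY_iff]
            have : toList v = List.replicate 1 1 := eq_rep1 _ (by omega) (by omega)
            rw [this]; rfl
          rw [this]; exact hy)
      -- (2,2): u has length 4
      · omega
    have hv11 : (toList v).count 0 = 1 ∧ (toList v).count 1 = 1 := by omega
    have hu' : u = wAB ∨ u = wBA := by
      rcases eq_11 (toList u) hu11.1 hu11.2 with h' | h'
      · left; rw [eq_wAB_iff]; exact h'
      · right; rw [eq_wBA_iff]; exact h'
    have hv' : v = wAB ∨ v = wBA := by
      rcases eq_11 (toList v) hv11.1 hv11.2 with h' | h'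
      · left; rw [eq_wAB_iff]; exact h'
      · right; rw [eq_wBA_iff]; exact h'
    rw [if_pos hu', if_pos hv']; norm_num
  · rw [if_neg h]
    by_cases hu1 : u = wAB ∨ u = wBA
    · by_cases hv1 : v = wAB ∨ v = wBA
      · exfalso
        apply h
        rcases hu1 with h' | h' <;> rcases hv1 with h'' | h'' <;> subst h' <;> subst h'' <;>
          exact ⟨by decide, by decide⟩
      · rw [if_neg hv1, mul_zero]
    · rw [if_neg hu1, zero_mul]

end Classify

lemma finale (τ : ℝ) {k : ℕ} (g : Fin k → NCPoly 2)
    (P4 : ∀ (i : Fin k) (w : Wd), 4 ≤ FreeMonoid.length w → (g i).coeff w = 0)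
    (hm : ∀ c : Wd → ℝ, (∀ u v : Wd, c (u * v) = c (v * u)) →
      c wXY + c wYX - 3 * c wXYYX + (1 - τ) * c 1
        = ∑ i, (g i).coeff.sum fun u a => (g i).coeff.sum fun v b => a * b * c (u.reverse * v)) :
    False := by
  have hlen : ∀ (i : Fin k) (w : Wd), (g i).coeff w ≠ 0 → (toList w).length ≤ 3 := by
    intro i w hw
    by_contra hcon
    refine hw (P4 i w ?_)
    have h : FreeMonoid.length w = (toList w).length := rfl
    omega
  -- Step (6,0)
  have h60 := hm (cnt 6 0) (cnt_cyc 6 0)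
  rw [Finset.sum_congr rfl (fun i _ => by
    rw [square_eq (g i) (cnt 6 0) _ (class60 (g i) (hlen i)), lin_single])] at h60
  rw [show cnt 6 0 wXY = 0 from if_neg (by decide), show cnt 6 0 wYX = 0 from if_neg (by decide),
    show cnt 6 0 wXYYX = 0 from if_neg (by decide),
    show cnt 6 0 1 = 0 from if_neg (by decide)] at h60
  have hx3 : ∀ i, (g i).coeff wX3 = 0 := sq_sum_zero _ (by linarith)
  -- Step (0,6)
  have h06 := hm (cnt 0 6) (cnt_cyc 0 6)
  rw [Finset.sum_congr rfl (fun i _ => by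
    rw [square_eq (g i) (cnt 0 6) _ (class06 (g i) (hlen i)), lin_single])] at h06
  rw [show cnt 0 6 wXY = 0 from if_neg (by decide), show cnt 0 6 wYX = 0 from if_neg (by decide),
    show cnt 0 6 wXYYX = 0 from if_neg (by decide),
    show cnt 0 6 1 = 0 from if_neg (by decide)] at h06
  have hy3 : ∀ i, (g i).coeff wY3 = 0 := sq_sum_zero _ (by linarith)
  -- Step (4,0)
  have h40 := hm (cnt 4 0) (cnt_cyc 4 0)
  rw [Finset.sum_congr rfl (fun i _ => by
    rw [square_eq (g i) (cnt 4 0) _ (class40 (g i) (hlen i) (hx3 i)), lin_single])] at h40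
  rw [show cnt 4 0 wXY = 0 from if_neg (by decide), show cnt 4 0 wYX = 0 from if_neg (by decide),
    show cnt 4 0 wXYYX = 0 from if_neg (by decide),
    show cnt 4 0 1 = 0 from if_neg (by decide)] at h40
  have hx2 : ∀ i, (g i).coeff wX2 = 0 := sq_sum_zero _ (by linarith)
  -- Step (0,4)
  have h04 := hm (cnt 0 4) (cnt_cyc 0 4)
  rw [Finset.sum_congr rfl (fun i _ => by
    rw [square_eq (g i) (cnt 0 4) _ (class04 (g i) (hlen i) (hy3 i)), lin_single])] at h04
  rw [show cnt 0 4 wXY = 0 from if_neg (by decide), show cnt 0 4 wYX = 0 from if_neg (by decide),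
    show cnt 0 4 wXYYX = 0 from if_neg (by decide),
    show cnt 0 4 1 = 0 from if_neg (by decide)] at h04
  have hy2 : ∀ i, (g i).coeff wY2 = 0 := sq_sum_zero _ (by linarith)
  -- Step (2,0)
  have h20 := hm (cnt 2 0) (cnt_cyc 2 0)
  rw [Finset.sum_congr rfl (fun i _ => by
    rw [square_eq (g i) (cnt 2 0) _ (class20 (g i) (hx2 i)), lin_single])] at h20
  rw [show cnt 2 0 wXY = 0 from if_neg (by decide), show cnt 2 0 wYX = 0 from if_neg (by decide),
    show cnt 2 0 wXYYX = 0 from if_neg (by decide),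
    show cnt 2 0 1 = 0 from if_neg (by decide)] at h20
  have hx1 : ∀ i, (g i).coeff wX = 0 := sq_sum_zero _ (by linarith)
  -- Step (0,2)
  have h02 := hm (cnt 0 2) (cnt_cyc 0 2)
  rw [Finset.sum_congr rfl (fun i _ => by
    rw [square_eq (g i) (cnt 0 2) _ (class02 (g i) (hy2 i)), lin_single])] at h02
  rw [show cnt 0 2 wXY = 0 from if_neg (by decide), show cnt 0 2 wYX = 0 from if_neg (by decide),
    show cnt 0 2 wXYYX = 0 from if_neg (by decide),
    show cnt 0 2 1 = 0 from if_neg (by decide)] at h02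
  have hy1 : ∀ i, (g i).coeff wY = 0 := sq_sum_zero _ (by linarith)
  -- Step (2,2): contradiction
  have h22 := hm (cnt 2 2) (cnt_cyc 2 2)
  rw [Finset.sum_congr rfl (fun i _ => by
    rw [square_eq (g i) (cnt 2 2) _
        (class22 (g i) (hlen i) (hx1 i) (hy1 i) (hx2 i) (hy2 i)),
      lin_pair (g i) wAB wBA (by decide)])] at h22
  rw [show cnt 2 2 wXY = 0 from if_neg (by decide), show cnt 2 2 wYX = 0 from if_neg (by decide),
    show cnt 2 2 wXYYX = 1 from if_pos (by decide),
    show cnt 2 2 1 = 0 from if_neg (by decide)] at h22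
  have hpos : (0:ℝ) ≤ ∑ i, ((g i).coeff wAB + (g i).coeff wBA) ^ 2 :=
    Finset.sum_nonneg fun i _ => sq_nonneg _
  linarith

/-! ### Graded symmetric matrices for the degree-reduction step -/

section Matrices

variable (D : ℕ)

/-- The "creation" matrix for letter `i` on words of length at most `D`. -/
noncomputable def up (i : Fin 2) : Matrix (WordLE 2 D) (WordLE 2 D) ℝ :=
  fun a b => if a.1 = FreeMonoid.of i * b.1 then 1 else 0

/-- Symmetrized letter matrices. -/
noncomputable def AM (i : Fin 2) : Matrix (WordLE 2 D) (WordLE 2 D) ℝ :=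
  up D i + (up D i)ᵀ

/-- Evaluation of words at the symmetrized letter matrices. -/
noncomputable def φM : FreeMonoid (Fin 2) →* Matrix (WordLE 2 D) (WordLE 2 D) ℝ :=
  FreeMonoid.lift (fun i => AM D i)

lemma AM_symm (i : Fin 2) : (AM D i)ᵀ = AM D i := by
  unfold AM
  rw [Matrix.transpose_add, Matrix.transpose_transpose, add_comm]

lemma φM_of (i : Fin 2) : φM D (FreeMonoid.of i) = AM D i :=
  FreeMonoid.lift_eval_of _ i

lemma φM_rev (m : FreeMonoid (Fin 2)) : (φM D m)ᵀ = φM D m.reverse := by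
  induction m using FreeMonoid.recOn with
  | one =>
    rw [map_one, Matrix.transpose_one,
      show (FreeMonoid.reverse (1 : FreeMonoid (Fin 2))) = 1 from rfl, map_one]
  | of_mul x ms ih =>
    rw [map_mul, Matrix.transpose_mul, φM_of, AM_symm, ih, FreeMonoid.reverse_mul,
      FreeMonoid.reverse_of, map_mul, φM_of]

lemma sum_up_eq (i : Fin 2) (F : WordLE 2 D → ℝ) (a s₀ : WordLE 2 D)
    (hs : a.1 = FreeMonoid.of i * s₀.1) :
    ∑ s : WordLE 2 D, (if a.1 = FreeMonoid.of i * s.1 then (1:ℝ) else 0) * F s = F s₀ := by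
  have key : ∀ s : WordLE 2 D, (a.1 = FreeMonoid.of i * s.1) ↔ s = s₀ := by
    intro s
    constructor
    · intro h
      apply Subtype.ext
      have h2 := congrArg toList (hs.symm.trans h)
      rw [toList_of_mul, toList_of_mul] at h2
      exact (toList.injective (by simpa using h2)).symm
    · rintro rfl; exact hs
  rw [show (fun s : WordLE 2 D => (if a.1 = FreeMonoid.of i * s.1 then (1:ℝ) else 0) * F s)
      = fun s => if s = s₀ then F s else 0 from funext fun s => by
    rw [if_congr (key s) rfl rfl]
    by_cases h : s = s₀ <;> simp [h]]
  rw [Finset.sum_ite_eq' Finset.univ s₀ F, if_pos (Finset.mem_univ s₀)]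

lemma sum_up_zero (i : Fin 2) (F : WordLE 2 D → ℝ) (a : WordLE 2 D)
    (hs : ∀ s : WordLE 2 D, a.1 ≠ FreeMonoid.of i * s.1) :
    ∑ s : WordLE 2 D, (if a.1 = FreeMonoid.of i * s.1 then (1:ℝ) else 0) * F s = 0 :=
  Finset.sum_eq_zero fun s _ => by rw [if_neg (hs s), zero_mul]

lemma sum_dn_eq (i : Fin 2) (F : WordLE 2 D → ℝ) (a s₀ : WordLE 2 D)
    (hs : s₀.1 = FreeMonoid.of i * a.1) :
    ∑ s : WordLE 2 D, (if s.1 = FreeMonoid.of i * a.1 then (1:ℝ) else 0) * F s = F s₀ := by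
  have key : ∀ s : WordLE 2 D, (s.1 = FreeMonoid.of i * a.1) ↔ s = s₀ := by
    intro s
    constructor
    · intro h
      exact Subtype.ext (h.trans hs.symm)
    · rintro rfl; exact hs
  rw [show (fun s : WordLE 2 D => (if s.1 = FreeMonoid.of i * a.1 then (1:ℝ) else 0) * F s)
      = fun s => if s = s₀ then F s else 0 from funext fun s => by
    rw [if_congr (key s) rfl rfl]
    by_cases h : s = s₀ <;> simp [h]]
  rw [Finset.sum_ite_eq' Finset.univ s₀ F, if_pos (Finset.mem_univ s₀)]

lemma sum_dn_zero (i : Fin 2) (F : WordLE 2 D → ℝ) (a : WordLE 2 D)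
    (hs : ∀ s : WordLE 2 D, s.1 ≠ FreeMonoid.of i * a.1) :
    ∑ s : WordLE 2 D, (if s.1 = FreeMonoid.of i * a.1 then (1:ℝ) else 0) * F s = 0 :=
  Finset.sum_eq_zero fun s _ => by rw [if_neg (hs s), zero_mul]

lemma AM_mul_apply (i : Fin 2) (M : Matrix (WordLE 2 D) (WordLE 2 D) ℝ) (a b : WordLE 2 D) :
    (AM D i * M) a b
      = (∑ s : WordLE 2 D, (if a.1 = FreeMonoid.of i * s.1 then (1:ℝ) else 0) * M s b)
        + ∑ s : WordLE 2 D, (if s.1 = FreeMonoid.of i * a.1 then (1:ℝ) else 0) * M s b := by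
  rw [Matrix.mul_apply, ← Finset.sum_add_distrib]
  refine Finset.sum_congr rfl fun s _ => ?_
  unfold AM
  rw [Matrix.add_apply, Matrix.transpose_apply, add_mul]
  rfl

end Matrices

section Entries

variable (D : ℕ)

lemma len_toList (w : Wd) : FreeMonoid.length w = (toList w).length := rfl

lemma φM_zero_entry : ∀ (m : FreeMonoid (Fin 2)) (a b : WordLE 2 D),
    FreeMonoid.length m + FreeMonoid.length b.1 < FreeMonoid.length a.1 → φM D m a b = 0 := by
  intro m
  induction m using FreeMonoid.recOn with
  | one =>
    intro a b h
    rw [map_one]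
    have hne : a ≠ b := by
      intro he
      subst he
      simp [FreeMonoid.length_one] at h
    rw [Matrix.one_apply_ne hne]
  | of_mul x ms ih =>
    intro a b h
    rw [map_mul, φM_of, AM_mul_apply]
    have hlx : FreeMonoid.length (FreeMonoid.of x * ms) = 1 + FreeMonoid.length ms := by
      rw [FreeMonoid.length_mul, FreeMonoid.length_of]
    have hup : (∑ s : WordLE 2 D,
        (if a.1 = FreeMonoid.of x * s.1 then (1:ℝ) else 0) * φM D ms s b) = 0 := by
      rcases htl : toList a.1 with _ | ⟨j, t⟩
      · apply sum_up_zero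
        intro s hs
        have h2 := congrArg toList hs
        rw [htl, toList_of_mul] at h2
        simp at h2
      · by_cases hj : j = x
        · subst hj
          have hlena : FreeMonoid.length a.1 = t.length + 1 := by
            rw [len_toList, htl]; simp
          have hts : FreeMonoid.length (ofList t : Wd) ≤ D := by
            have := a.2
            rw [len_toList, toList_ofList]
            omega
          rw [sum_up_eq D j _ a ⟨ofList t, hts⟩ (toList.injective (by rw [htl]; rfl))]
          apply ih
          show FreeMonoid.length ms + FreeMonoid.length b.1 < FreeMonoid.length (ofList t : Wd)
          have hot : FreeMonoid.length (ofList t : Wd) = t.length := rfl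
          omega
        · apply sum_up_zero
          intro s hs
          have h2 := congrArg toList hs
          rw [htl, toList_of_mul] at h2
          exact hj (List.head_eq_of_cons_eq h2)
    have hdn : (∑ s : WordLE 2 D,
        (if s.1 = FreeMonoid.of x * a.1 then (1:ℝ) else 0) * φM D ms s b) = 0 := by
      by_cases h' : FreeMonoid.length a.1 < D
      · have hlen' : FreeMonoid.length (FreeMonoid.of x * a.1) ≤ D := by
          rw [FreeMonoid.length_mul, FreeMonoid.length_of]
          omega
        rw [sum_dn_eq D x _ a ⟨FreeMonoid.of x * a.1, hlen'⟩ rfl]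
        apply ih
        rw [FreeMonoid.length_mul, FreeMonoid.length_of]
        omega
      · apply sum_dn_zero
        intro s hs
        have h2 := congrArg FreeMonoid.length hs
        have h3 := s.2
        have h4 := a.2
        rw [FreeMonoid.length_mul, FreeMonoid.length_of] at h2
        omega
    rw [hup, hdn, add_zero]

lemma φM_top_entry : ∀ (m : FreeMonoid (Fin 2)) (a b : WordLE 2 D),
    FreeMonoid.length a.1 = FreeMonoid.length m + FreeMonoid.length b.1 →
    φM D m a b = if a.1 = m * b.1 then 1 else 0 := by
  intro m
  induction m using FreeMonoid.recOn with
  | one =>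
    intro a b h
    rw [map_one, one_mul, Matrix.one_apply]
    exact if_congr Subtype.ext_iff rfl rfl
  | of_mul x ms ih =>
    intro a b h
    rw [map_mul, φM_of, AM_mul_apply]
    rw [FreeMonoid.length_mul, FreeMonoid.length_of] at h
    have hdn : (∑ s : WordLE 2 D,
        (if s.1 = FreeMonoid.of x * a.1 then (1:ℝ) else 0) * φM D ms s b) = 0 := by
      by_cases h' : FreeMonoid.length a.1 < D
      · have hlen' : FreeMonoid.length (FreeMonoid.of x * a.1) ≤ D := by
          rw [FreeMonoid.length_mul, FreeMonoid.length_of]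
          omega
        rw [sum_dn_eq D x _ a ⟨FreeMonoid.of x * a.1, hlen'⟩ rfl]
        apply φM_zero_entry
        rw [FreeMonoid.length_mul, FreeMonoid.length_of]
        omega
      · apply sum_dn_zero
        intro s hs
        have h2 := congrArg FreeMonoid.length hs
        have h3 := s.2
        have h4 := a.2
        rw [FreeMonoid.length_mul, FreeMonoid.length_of] at h2
        omega
    rw [hdn, add_zero]
    rcases htl : toList a.1 with _ | ⟨j, t⟩
    · rw [sum_up_zero D x _ a (fun s hs => by
        have h2 := congrArg toList hs
        rw [htl, toList_of_mul] at h2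
        simp at h2)]
      rw [if_neg (fun hh => by
        have h2 := congrArg toList hh
        rw [htl, mul_assoc, toList_of_mul] at h2
        simp at h2)]
    · by_cases hj : j = x
      · subst hj
        have hlena : FreeMonoid.length a.1 = t.length + 1 := by
          rw [len_toList, htl]; simp
        have hts : FreeMonoid.length (ofList t : Wd) ≤ D := by
          have := a.2
          rw [len_toList, toList_ofList]
          omega
        rw [sum_up_eq D j _ a ⟨ofList t, hts⟩ (toList.injective (by rw [htl]; rfl))]
        rw [ih ⟨ofList t, hts⟩ b (by rw [len_toList, toList_ofList]; omega)]
        refine if_congr ?_ rfl rfl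
        constructor
        · intro hh
          apply toList.injective
          rw [htl, mul_assoc, toList_of_mul, ← hh]
          rfl
        · intro hh
          apply toList.injective
          have h2 := congrArg toList hh
          rw [htl, mul_assoc, toList_of_mul] at h2
          simpa using h2
      · rw [sum_up_zero D x _ a (fun s hs => by
          have h2 := congrArg toList hs
          rw [htl, toList_of_mul] at h2
          exact hj (List.head_eq_of_cons_eq h2))]
        rw [if_neg (fun hh => by
          have h2 := congrArg toList hh
          rw [htl, mul_assoc, toList_of_mul] at h2
          exact hj (List.head_eq_of_cons_eq h2))]

end Entries

/-! ### The trace weight and the degree-reduction step -/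

noncomputable def cD (D : ℕ) : Wd → ℝ :=
  fun z => if FreeMonoid.length z = 2 * D then Matrix.trace (φM D z) else 0

lemma cD_cyc (D : ℕ) (u v : Wd) : cD D (u * v) = cD D (v * u) := by
  unfold cD
  rw [FreeMonoid.length_mul, FreeMonoid.length_mul]
  exact if_congr (by omega) (by rw [map_mul, map_mul, Matrix.trace_mul_comm]) rfl

lemma trace_transpose_mul_self (D : ℕ) (M : Matrix (WordLE 2 D) (WordLE 2 D) ℝ) :
    Matrix.trace (Mᵀ * M) = ∑ b : WordLE 2 D, ∑ a : WordLE 2 D, (M a b) ^ 2 := by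
  rw [Matrix.trace]
  refine Finset.sum_congr rfl fun b _ => ?_
  rw [Matrix.diag_apply, Matrix.mul_apply]
  refine Finset.sum_congr rfl fun a _ => ?_
  rw [Matrix.transpose_apply, sq]

lemma stepdown (τ : ℝ) {k : ℕ} (g : Fin k → NCPoly 2)
    (hm : ∀ c : Wd → ℝ, (∀ u v : Wd, c (u * v) = c (v * u)) →
      c wXY + c wYX - 3 * c wXYYX + (1 - τ) * c 1
        = ∑ i, (g i).coeff.sum fun u a => (g i).coeff.sum fun v b => a * b * c (u.reverse * v))
    (D : ℕ) (hD : 4 ≤ D) (H : ∀ (i : Fin k) (w : Wd), D + 1 ≤ FreeMonoid.length w → (g i).coeff w = 0) :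
    ∀ (i : Fin k) (w : Wd), D ≤ FreeMonoid.length w → (g i).coeff w = 0 := by
  have hsupp : ∀ (i : Fin k) (w : Wd), (g i).coeff w ≠ 0 → FreeMonoid.length w ≤ D := by
    intro i w hw
    by_contra hcon
    exact hw (H i w (by omega))
  -- the truncated top-degree evaluations
  set HM : Fin k → Matrix (WordLE 2 D) (WordLE 2 D) ℝ :=
    fun i => (g i).coeff.sum fun u a => if FreeMonoid.length u = D then a • φM D u else 0 with hHM
  have hSi : ∀ i : Fin k,
      ((g i).coeff.sum fun u a => (g i).coeff.sum fun v b => a * b * cD D (u.reverse * v))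
        = Matrix.trace ((HM i)ᵀ * HM i) := by
    intro i
    have hT : HM i = ∑ u ∈ (g i).coeff.support,
        (if FreeMonoid.length u = D then (g i).coeff u • φM D u else 0) := rfl
    have hL : ((g i).coeff.sum fun u a => (g i).coeff.sum fun v b => a * b * cD D (u.reverse * v))
        = ∑ u ∈ (g i).coeff.support, ∑ v ∈ (g i).coeff.support,
            ((g i).coeff u) * ((g i).coeff v) * cD D (u.reverse * v) := rfl
    rw [hL, hT, Matrix.transpose_sum, Finset.sum_mul, Matrix.trace_sum]
    refine Finset.sum_congr rfl fun u hu => ?_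
    rw [Finset.mul_sum, Matrix.trace_sum]
    refine Finset.sum_congr rfl fun v hv => ?_
    have hlu : FreeMonoid.length u ≤ D := hsupp i u (Finsupp.mem_support_iff.1 hu)
    have hlv : FreeMonoid.length v ≤ D := hsupp i v (Finsupp.mem_support_iff.1 hv)
    have hlrev : FreeMonoid.length (u.reverse * v)
        = FreeMonoid.length u + FreeMonoid.length v := by
      rw [FreeMonoid.length_mul, FreeMonoid.length_reverse]
    by_cases hud : FreeMonoid.length u = D
    · by_cases hvd : FreeMonoid.length v = D
      · rw [if_pos hud, if_pos hvd, Matrix.transpose_smul, Matrix.smul_mul, Matrix.mul_smul,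
          Matrix.trace_smul, Matrix.trace_smul, φM_rev, ← map_mul (φM D) u.reverse v]
        rw [show cD D (u.reverse * v) = Matrix.trace (φM D (u.reverse * v)) from
          if_pos (by omega)]
        rw [smul_eq_mul, smul_eq_mul]
        ring
      · rw [if_neg hvd, mul_zero, Matrix.trace_zero,
          show cD D (u.reverse * v) = 0 from if_neg (by omega), mul_zero]
    · rw [if_neg hud, Matrix.transpose_zero, zero_mul, Matrix.trace_zero,
        show cD D (u.reverse * v) = 0 from if_neg (by omega), mul_zero]
  have hE := hm (cD D) (cD_cyc D)
  rw [Finset.sum_congr rfl (fun i _ => hSi i)] at hE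
  rw [show cD D wXY = 0 from if_neg (by
      rw [show FreeMonoid.length wXY = 6 from rfl]; omega),
    show cD D wYX = 0 from if_neg (by
      rw [show FreeMonoid.length wYX = 6 from rfl]; omega),
    show cD D wXYYX = 0 from if_neg (by
      rw [show FreeMonoid.length wXYYX = 4 from rfl]; omega),
    show cD D (1 : Wd) = 0 from if_neg (by
      rw [show FreeMonoid.length (1 : Wd) = 0 from rfl]; omega)] at hE
  have hE0 : ∑ i : Fin k, Matrix.trace ((HM i)ᵀ * HM i) = 0 := by linarith
  have htr : ∀ i : Fin k, Matrix.trace ((HM i)ᵀ * HM i) = 0 := by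
    intro i
    refine (Finset.sum_eq_zero_iff_of_nonneg (fun j _ => ?_)).1 hE0 i (Finset.mem_univ i)
    rw [trace_transpose_mul_self]
    exact Finset.sum_nonneg fun b _ => Finset.sum_nonneg fun a _ => sq_nonneg _
  have hent : ∀ (i : Fin k) (a b : WordLE 2 D), HM i a b = 0 := by
    intro i a b
    have h0 := htr i
    rw [trace_transpose_mul_self] at h0
    have h1 := (Finset.sum_eq_zero_iff_of_nonneg
      (fun b' _ => Finset.sum_nonneg fun a' _ => sq_nonneg _)).1 h0 b (Finset.mem_univ b)
    have h2 := (Finset.sum_eq_zero_iff_of_nonneg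
      (fun a' _ => sq_nonneg _)).1 h1 a (Finset.mem_univ a)
    exact (pow_eq_zero_iff (by norm_num : (2:ℕ) ≠ 0)).1 h2
  -- extraction of top coefficients
  intro i w hw
  by_cases hw1 : D + 1 ≤ FreeMonoid.length w
  · exact H i w hw1
  have hwD : FreeMonoid.length w = D := by omega
  have hwle : FreeMonoid.length w ≤ D := by omega
  have hb1 : FreeMonoid.length (1 : Wd) ≤ D := by
    rw [show FreeMonoid.length (1 : Wd) = 0 from rfl]; omega
  have hT2 : HM i = ∑ u ∈ (g i).coeff.support,
      (if FreeMonoid.length u = D then (g i).coeff u • φM D u else 0) := rfl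
  have hx0 : ∑ u ∈ (g i).coeff.support,
      (if FreeMonoid.length u = D then (g i).coeff u • φM D u else 0) ⟨w, hwle⟩ ⟨1, hb1⟩ = 0 :=
    (Matrix.sum_apply _ _ _ _).symm.trans (hent i ⟨w, hwle⟩ ⟨1, hb1⟩)
  rw [Finset.sum_congr rfl (fun u hu => show
      (if FreeMonoid.length u = D then (g i).coeff u • φM D u else 0) ⟨w, hwle⟩ ⟨1, hb1⟩
        = (if u = w then (g i).coeff u else 0) from by
    by_cases hud : FreeMonoid.length u = D
    · rw [if_pos hud]
      erw [Matrix.smul_apply]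
      rw [smul_eq_mul,
        φM_top_entry D u ⟨w, hwle⟩ ⟨1, hb1⟩ (by
          show FreeMonoid.length w = FreeMonoid.length u + FreeMonoid.length (1 : Wd)
          rw [show FreeMonoid.length (1 : Wd) = 0 from rfl, hwD, hud]
          omega)]
      by_cases huw : u = w
      · subst huw
        rw [if_pos (by rw [mul_one] : (u:Wd) = u * 1), if_pos rfl, mul_one]
      · rw [if_neg (by rw [mul_one]; exact fun hh => huw hh.symm), mul_zero, if_neg huw]
    · rw [if_neg hud]
      erw [Matrix.zero_apply]
      rw [if_neg (fun hh => hud (by rw [hh, hwD]))])] at hx0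
  rw [Finset.sum_ite_eq' (g i).coeff.support w (fun u => (g i).coeff u)] at hx0
  by_cases hmem : w ∈ (g i).coeff.support
  · rwa [if_pos hmem] at hx0
  · exact Finsupp.notMem_support_iff.1 hmem

lemma degRed (τ : ℝ) {k : ℕ} (g : Fin k → NCPoly 2)
    (hm : ∀ c : Wd → ℝ, (∀ u v : Wd, c (u * v) = c (v * u)) →
      c wXY + c wYX - 3 * c wXYYX + (1 - τ) * c 1
        = ∑ i, (g i).coeff.sum fun u a => (g i).coeff.sum fun v b => a * b * c (u.reverse * v)) :
    ∀ (i : Fin k) (w : Wd), 4 ≤ FreeMonoid.length w → (g i).coeff w = 0 := by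
  set B := Finset.univ.sup (fun i : Fin k => (g i).coeff.support.sup fun w => FreeMonoid.length w)
    with hB
  have hQB : ∀ (i : Fin k) (w : Wd), B + 1 ≤ FreeMonoid.length w → (g i).coeff w = 0 := by
    intro i w hw
    by_contra h0
    have hmem : w ∈ (g i).coeff.support := Finsupp.mem_support_iff.2 h0
    have h1 : FreeMonoid.length w ≤ (g i).coeff.support.sup (fun w => FreeMonoid.length w) :=
      Finset.le_sup hmem
    have h2 : (g i).coeff.support.sup (fun w => FreeMonoid.length w) ≤ B :=
      Finset.le_sup (f := fun i : Fin k => (g i).coeff.support.sup fun w => FreeMonoid.length w)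
        (Finset.mem_univ i)
    omega
  have hdesc : ∀ n : ℕ, (∀ (i : Fin k) (w : Wd), 4 + n ≤ FreeMonoid.length w → (g i).coeff w = 0) →
      ∀ (i : Fin k) (w : Wd), 4 ≤ FreeMonoid.length w → (g i).coeff w = 0 := by
    intro n
    induction n with
    | zero => exact fun h => h
    | succ n ih =>
      intro h
      refine ih (stepdown τ g hm (4 + n) (by omega) ?_)
      intro i w hw
      exact h i w (by omega)
  intro i w hw
  by_cases hcmp : B + 1 ≤ 4
  · exact hQB i w (by omega)
  · exact hdesc (B + 1 - 4) (fun i w hw' => hQB i w (by omega)) i w hw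

end MncAux

/-- For no `τ ∈ ℝ` is `M_nc - τ` cyclically equivalent to a sum of
Hermitian squares, i.e. `M_nc - τ ∉ Θ` for every `τ`. -/
theorem Mnc_sub_tau_not_in_Theta : ∀ τ : ℝ, Mnc - τ • 1 ∉ Theta 2 := by
  intro τ h
  obtain ⟨σ, hσ, hcyc⟩ := h
  obtain ⟨k, g, rfl⟩ := hσ
  obtain ⟨m, p, q, hpq⟩ := hcyc
  have hm := fun c hc => MncAux.master τ g p q hpq c hc
  exact MncAux.finale τ g (MncAux.degRed τ g hm) hm
end

section
/- (Noncommutative Putinar Positivstellensatz.) Let 𝔤 be a finite set of symmetric elements of ℝ⟨x⟩ such that Q(𝔤) is Archimedean, and let f ∈ ℝ⟨x⟩ be symmetric. If for every Hilbert space H and every tuple A of bounded self-adjoint operators on H with g(A) positive for all g ∈ 𝔤, the operator f(A) is positive definite (i.e., ⟨f(A)v, v⟩ > 0 for every nonzero v ∈ H), then f ∈ Q(𝔤). -/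
open scoped Matrix

/-- Evaluation of an nc polynomial at a tuple of bounded operators on a Hilbert space. -/
noncomputable def ncEvalOp {n : ℕ} {H : Type} [NormedAddCommGroup H]
    [InnerProductSpace ℝ H] (A : Fin n → (H →L[ℝ] H)) : NCPoly n →ₐ[ℝ] (H →L[ℝ] H) :=
  MonoidAlgebra.lift ℝ _ (FreeMonoid (Fin n)) (FreeMonoid.lift A)


set_option maxHeartbeats 1000000

section Star
variable {n : ℕ}

lemma ncStar_add (f g : NCPoly n) : ncStar (f + g) = ncStar f + ncStar g :=
  congrArg MonoidAlgebra.ofCoeff Finsupp.mapDomain_add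

lemma ncStar_smul (c : ℝ) (f : NCPoly n) : ncStar (c • f) = c • ncStar f :=
  congrArg MonoidAlgebra.ofCoeff (Finsupp.mapDomain_smul c f.coeff)

lemma ncStar_single (w : FreeMonoid (Fin n)) (r : ℝ) :
    ncStar (MonoidAlgebra.single w r : NCPoly n) = MonoidAlgebra.single w.reverse r :=
  congrArg MonoidAlgebra.ofCoeff Finsupp.mapDomain_single

lemma ncStar_one : ncStar (1 : NCPoly n) = 1 := by
  show ncStar (MonoidAlgebra.single 1 1 : NCPoly n) = _
  rw [ncStar_single]; rfl

lemma ncStar_mul (f g : NCPoly n) : ncStar (f * g) = ncStar g * ncStar f := by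
  induction f using MonoidAlgebra.induction_linear with
  | zero => simp [ncStar, Finsupp.mapDomain_zero]
  | add a b ha hb => rw [add_mul, ncStar_add, ha, hb, ncStar_add, mul_add]
  | single w r =>
    induction g using MonoidAlgebra.induction_linear with
    | zero => simp [ncStar, Finsupp.mapDomain_zero]
    | add a b ha hb => rw [mul_add, ncStar_add, ha, hb, ncStar_add, add_mul]
    | single w' r' =>
      show ncStar ((MonoidAlgebra.single w r : NCPoly n) * MonoidAlgebra.single w' r') =
        ncStar (MonoidAlgebra.single w' r' : NCPoly n) * ncStar (MonoidAlgebra.single w r : NCPoly n)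
      rw [MonoidAlgebra.single_mul_single, ncStar_single, ncStar_single, ncStar_single,
        MonoidAlgebra.single_mul_single, mul_comm r' r, ← FreeMonoid.reverse_mul]

lemma ncStar_ncStar (f : NCPoly n) : ncStar (ncStar f) = f := by
  unfold ncStar
  rw [MonoidAlgebra.coeff_ofCoeff, ← Finsupp.mapDomain_comp,
    show FreeMonoid.reverse ∘ FreeMonoid.reverse = (id : FreeMonoid (Fin n) → _) by
      funext w; simp, Finsupp.mapDomain_id, MonoidAlgebra.ofCoeff_coeff]

noncomputable def ncStarL (n : ℕ) : NCPoly n →ₗ[ℝ] NCPoly n where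
  toFun := ncStar
  map_add' := ncStar_add
  map_smul' := ncStar_smul

end Star

section QM
variable {n : ℕ} {G : Finset (NCPoly n)}

lemma qm_zero : (0 : NCPoly n) ∈ QModule G :=
  ⟨0, Fin.elim0, Fin.elim0, fun i => i.elim0, by simp⟩

lemma qm_term {g : NCPoly n} (hg : g ∈ (G : Set (NCPoly n)) ∪ {1}) (p : NCPoly n) :
    ncStar p * g * p ∈ QModule G :=
  ⟨1, fun _ => g, fun _ => p, fun _ => hg, by simp⟩

lemma qm_sq (p : NCPoly n) : ncStar p * p ∈ QModule G := by
  have := qm_term (G := G) (g := 1) (Or.inr rfl) p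
  rwa [mul_one] at this

lemma qm_one : (1 : NCPoly n) ∈ QModule G := by
  have := qm_sq (G := G) (1 : NCPoly n)
  rwa [ncStar_one, one_mul] at this

lemma qm_add {a b : NCPoly n} (ha : a ∈ QModule G) (hb : b ∈ QModule G) :
    a + b ∈ QModule G := by
  obtain ⟨k₁, g₁, p₁, hg₁, rfl⟩ := ha
  obtain ⟨k₂, g₂, p₂, hg₂, rfl⟩ := hb
  refine ⟨k₁ + k₂, Fin.append g₁ g₂, Fin.append p₁ p₂, ?_, ?_⟩
  · intro i
    refine Fin.addCases (fun j => ?_) (fun j => ?_) i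
    · rw [Fin.append_left]; exact hg₁ j
    · rw [Fin.append_right]; exact hg₂ j
  · rw [Fin.sum_univ_add]
    congr 1 <;> [skip; skip] <;> refine Finset.sum_congr rfl fun i _ => ?_ <;>
      simp [Fin.append_left, Fin.append_right]

lemma qm_smul {c : ℝ} (hc : 0 ≤ c) {a : NCPoly n} (ha : a ∈ QModule G) :
    c • a ∈ QModule G := by
  obtain ⟨k, g, p, hg, rfl⟩ := ha
  refine ⟨k, g, fun i => Real.sqrt c • p i, hg, ?_⟩
  rw [Finset.smul_sum]
  refine Finset.sum_congr rfl fun i _ => ?_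
  rw [ncStar_smul]
  simp only [smul_mul_assoc, mul_smul_comm, smul_smul, Real.mul_self_sqrt hc]

lemma qm_conj {a : NCPoly n} (ha : a ∈ QModule G) (r : NCPoly n) :
    ncStar r * a * r ∈ QModule G := by
  obtain ⟨k, g, p, hg, rfl⟩ := ha
  refine ⟨k, g, fun i => p i * r, hg, ?_⟩
  rw [Finset.mul_sum, Finset.sum_mul]
  refine Finset.sum_congr rfl fun i _ => ?_
  rw [ncStar_mul]; simp only [mul_assoc]

lemma qm_symm (hG : ∀ g ∈ G, ncStar g = g) {a : NCPoly n} (ha : a ∈ QModule G) :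
    ncStar a = a := by
  obtain ⟨k, g, p, hg, rfl⟩ := ha
  have : ∀ i, ncStar (ncStar (p i) * g i * p i) = ncStar (p i) * g i * p i := by
    intro i
    rw [ncStar_mul, ncStar_mul, ncStar_ncStar]
    have hgi : ncStar (g i) = g i := by
      rcases hg i with h | h
      · exact hG _ h
      · simp only [Set.mem_singleton_iff] at h; rw [h, ncStar_one]
    rw [hgi, mul_assoc]
  calc ncStar (∑ i, ncStar (p i) * g i * p i) = ∑ i, ncStar (ncStar (p i) * g i * p i) := by
        induction (Finset.univ : Finset (Fin k)) using Finset.induction with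
        | empty => simp [show ncStar (0 : NCPoly n) = 0 from congrArg MonoidAlgebra.ofCoeff Finsupp.mapDomain_zero]
        | insert _ _ hx ih => rw [Finset.sum_insert hx, Finset.sum_insert hx, ncStar_add, ih]
    _ = _ := Finset.sum_congr rfl fun i _ => this i

end QM

section Sep
variable {n : ℕ} {G : Finset (NCPoly n)} {f : NCPoly n}

lemma ncStar_neg (v : NCPoly n) : ncStar (-v) = -ncStar v := by
  have := ncStar_smul (-1 : ℝ) v; simpa using this

lemma ncStar_sub (u v : NCPoly n) : ncStar (u - v) = ncStar u - ncStar v := by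
  rw [sub_eq_add_neg, ncStar_add, ncStar_neg, sub_eq_add_neg]

/-- Order-unit property of the quadratic module, from the Archimedean hypothesis. -/
lemma qm_unit
    (harch : ∀ q : NCPoly n, ∃ R : ℕ, 0 < R ∧
        (R : ℝ) • (1 : NCPoly n) - ncStar q * q ∈ QModule G) (u : NCPoly n) :
    ∃ R : ℝ, 0 ≤ R ∧ R • (1 : NCPoly n) - (u + ncStar u) ∈ QModule G := by
  obtain ⟨R, -, hR⟩ := harch (1 + u)
  refine ⟨R, by positivity, ?_⟩
  have key : (R : ℝ) • (1 : NCPoly n) - (u + ncStar u) =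
      ((R : ℝ) • 1 - ncStar (1 + u) * (1 + u)) + (ncStar u * u + 1) := by
    rw [ncStar_add, ncStar_one]; noncomm_ring
  rw [key]
  exact qm_add hR (qm_add (qm_sq u) qm_one)

/-- The enlarged cone used for separation. -/
def ConeC (G : Finset (NCPoly n)) (f : NCPoly n) : Set (NCPoly n) :=
  {v | ∃ m ∈ QModule G, ∃ t : ℝ, 0 ≤ t ∧ ∃ a : NCPoly n, ncStar a = -a ∧ v = m - t • f + a}

lemma coneC_of_qm {m : NCPoly n} (hm : m ∈ QModule G) : m ∈ ConeC G f :=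
  ⟨m, hm, 0, le_refl 0, 0, by rw [show ncStar (0 : NCPoly n) = 0 from congrArg MonoidAlgebra.ofCoeff Finsupp.mapDomain_zero]; simp,
    by simp⟩

lemma coneC_neg_f : -f ∈ ConeC G f :=
  ⟨0, qm_zero, 1, zero_le_one, 0,
    by rw [show ncStar (0 : NCPoly n) = 0 from congrArg MonoidAlgebra.ofCoeff Finsupp.mapDomain_zero]; simp, by simp⟩

lemma coneC_antisym {a : NCPoly n} (ha : ncStar a = -a) : a ∈ ConeC G f :=
  ⟨0, qm_zero, 0, le_refl 0, a, ha, by simp⟩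

lemma coneC_add {u v : NCPoly n} (hu : u ∈ ConeC G f) (hv : v ∈ ConeC G f) :
    u + v ∈ ConeC G f := by
  obtain ⟨m₁, hm₁, t₁, ht₁, a₁, ha₁, rfl⟩ := hu
  obtain ⟨m₂, hm₂, t₂, ht₂, a₂, ha₂, rfl⟩ := hv
  exact ⟨m₁ + m₂, qm_add hm₁ hm₂, t₁ + t₂, by positivity, a₁ + a₂,
    by rw [ncStar_add, ha₁, ha₂]; abel, by rw [add_smul]; abel⟩

lemma coneC_smul {c : ℝ} (hc : 0 ≤ c) {v : NCPoly n} (hv : v ∈ ConeC G f) :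
    c • v ∈ ConeC G f := by
  obtain ⟨m, hm, t, ht, a, ha, rfl⟩ := hv
  exact ⟨c • m, qm_smul hc hm, c * t, by positivity, c • a,
    by rw [ncStar_smul, ha]; simp, by rw [smul_add, smul_sub, smul_smul]⟩

/-- Order unit for the big cone. -/
lemma coneC_unit
    (harch : ∀ q : NCPoly n, ∃ R : ℕ, 0 < R ∧
        (R : ℝ) • (1 : NCPoly n) - ncStar q * q ∈ QModule G) (v : NCPoly n) :
    ∃ R : ℝ, 0 ≤ R ∧ R • (1 : NCPoly n) - v ∈ ConeC G f := by
  obtain ⟨R, hR0, hR⟩ := qm_unit harch ((1 / 2 : ℝ) • v)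
  refine ⟨R, hR0, ?_⟩
  have ha : ncStar ((1 / 2 : ℝ) • ncStar v - (1 / 2 : ℝ) • v) =
      -((1 / 2 : ℝ) • ncStar v - (1 / 2 : ℝ) • v) := by
    rw [ncStar_sub, ncStar_smul, ncStar_smul, ncStar_ncStar]; abel
  refine ⟨_, hR, 0, le_refl 0, _, ha, ?_⟩
  rw [ncStar_smul]
  simp only [zero_smul, sub_zero]
  module

/-- If `f ∉ Q(𝔤)` then the cone contains no negative multiple of `1`. -/
lemma coneC_no_neg_one (hG : ∀ g ∈ G, ncStar g = g) (hf : ncStar f = f)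
    (harch : ∀ q : NCPoly n, ∃ R : ℕ, 0 < R ∧
        (R : ℝ) • (1 : NCPoly n) - ncStar q * q ∈ QModule G)
    (hfM : f ∉ QModule G) {t : ℝ} (ht : t < 0) :
    t • (1 : NCPoly n) ∉ ConeC G f := by
  rintro ⟨m, hm, s, hs, a, ha, hEq⟩
  -- take the symmetric part: a = 0
  have hstar : t • (1 : NCPoly n) = m - s • f - a := by
    have := congrArg ncStar hEq
    rw [ncStar_add, ncStar_sub, ncStar_smul, ncStar_smul, ncStar_one, qm_symm hG hm, hf, ha]
      at this
    rw [this]; abel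
  have ha0 : a = 0 := by
    have h2 : a + a = 0 := by
      have := hEq.symm.trans hstar
      have h' := sub_eq_zero.mpr this
      rw [show m - s • f + a - (m - s • f - a) = a + a by abel] at h'
      exact h'
    have h3 : (2 : ℝ) • a = 0 := by rw [two_smul]; exact h2
    exact (smul_eq_zero.mp h3).resolve_left (by norm_num)
  subst ha0
  rw [add_zero] at hEq
  rcases eq_or_lt_of_le hs with hs0 | hs0
  · -- s = 0 : a negative multiple of 1 lies in M, hence f ∈ M
    rw [← hs0, zero_smul, sub_zero] at hEq
    obtain ⟨R, hR0, hR⟩ := qm_unit harch (-f)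
    rw [ncStar_neg, hf, show -f + -f = (-2 : ℝ) • f by module, sub_eq_add_neg, ← neg_smul,
      neg_neg] at hR
    -- hR : R • 1 + 2 • f ∈ M
    have ht0 : t ≠ 0 := ne_of_lt ht
    have hc : (R / (-2 * t)) * t = -R / 2 := by
      field_simp
    have hf' : f = (1 / 2 : ℝ) • ((R : ℝ) • (1 : NCPoly n) + (2 : ℝ) • f)
        + (R / (-2 * t)) • (t • (1 : NCPoly n)) := by
      rw [smul_smul, hc]
      module
    have : f ∈ QModule G := by
      rw [hf']
      refine qm_add (qm_smul (by norm_num) hR) (qm_smul ?_ (hEq ▸ hm))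
      have : 0 < -2 * t := by linarith
      positivity
    exact hfM this
  · -- s > 0 : f ∈ M directly
    have hf' : f = (1 / s) • (m + (-t) • (1 : NCPoly n)) := by
      have : s • f = m - t • (1 : NCPoly n) := by
        rw [hEq]; abel
      have := congrArg (fun z => (1 / s : ℝ) • z) this
      simp only [smul_smul, one_div] at this
      rw [inv_mul_cancel₀ (ne_of_gt hs0), one_smul] at this
      rw [this]
      module
    refine hfM ?_
    rw [hf']
    exact qm_smul (by positivity) (qm_add hm (qm_smul (by linarith) qm_one))

end Sep

section Sep2
variable {n : ℕ} {G : Finset (NCPoly n)} {f : NCPoly n}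

/-- The separating linear functional. -/
lemma exists_functional (hG : ∀ g ∈ G, ncStar g = g) (hf : ncStar f = f)
    (harch : ∀ q : NCPoly n, ∃ R : ℕ, 0 < R ∧
        (R : ℝ) • (1 : NCPoly n) - ncStar q * q ∈ QModule G)
    (hfM : f ∉ QModule G) :
    ∃ L : NCPoly n →ₗ[ℝ] ℝ, L 1 = 1 ∧ (∀ m ∈ QModule G, 0 ≤ L m) ∧ L f ≤ 0 ∧
      ∀ v, L (ncStar v) = L v := by
  classical
  set S : NCPoly n → Set ℝ := fun v => {t | t • (1 : NCPoly n) - v ∈ ConeC G f} with hS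
  have hSne : ∀ v, (S v).Nonempty := by
    intro v
    obtain ⟨R, -, hR⟩ := coneC_unit (f := f) harch v
    exact ⟨R, hR⟩
  have hmem_add : ∀ {u v a b}, a ∈ S u → b ∈ S v → a + b ∈ S (u + v) := by
    intro u v a b hau hbv
    have : (a + b) • (1 : NCPoly n) - (u + v) = (a • 1 - u) + (b • 1 - v) := by module
    show _ ∈ ConeC G f
    rw [this]
    exact coneC_add hau hbv
  have hbdd : ∀ v, BddBelow (S v) := by
    intro v
    obtain ⟨t₀, ht₀⟩ := hSne (-v)
    refine ⟨-t₀, fun t ht => ?_⟩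
    by_contra hlt
    push_neg at hlt
    have hsum : t + t₀ ∈ S (v + -v) := hmem_add ht ht₀
    rw [add_neg_cancel] at hsum
    have : (t + t₀) • (1 : NCPoly n) ∈ ConeC G f := by
      have := hsum; simpa [S] using this
    exact coneC_no_neg_one hG hf harch hfM (by linarith) this
  set N : NCPoly n → ℝ := fun v => sInf (S v) with hN
  have hN_le : ∀ {v t}, t ∈ S v → N v ≤ t := fun h => csInf_le (hbdd _) h
  have hN_add : ∀ u v, N (u + v) ≤ N u + N v := by
    intro u v
    have h1 : ∀ a ∈ S u, N (u + v) - a ≤ N v := by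
      intro a ha
      refine le_csInf (hSne v) fun b hb => ?_
      have := hN_le (hmem_add ha hb)
      linarith
    have h2 : N (u + v) - N v ≤ N u := by
      refine le_csInf (hSne u) fun a ha => ?_
      have := h1 a ha; linarith
    linarith
  have hN_smul_le : ∀ (c : ℝ), 0 < c → ∀ v, N (c • v) ≤ c * N v := by
    intro c hc v
    have : N (c • v) / c ≤ N v := by
      refine le_csInf (hSne v) fun t ht => ?_
      have htc : c * t ∈ S (c • v) := by
        show _ ∈ ConeC G f
        have : (c * t) • (1 : NCPoly n) - c • v = c • (t • 1 - v) := by module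
        rw [this]
        exact coneC_smul hc.le ht
      have := hN_le htc
      rw [div_le_iff₀ hc]
      linarith [this]
    rw [div_le_iff₀ hc] at this
    linarith [this]
  have hN_hom : ∀ (c : ℝ), 0 < c → ∀ v, N (c • v) = c * N v := by
    intro c hc v
    refine le_antisymm (hN_smul_le c hc v) ?_
    have := hN_smul_le c⁻¹ (by positivity) (c • v)
    rw [smul_smul, inv_mul_cancel₀ (ne_of_gt hc), one_smul] at this
    have := mul_le_mul_of_nonneg_left this hc.le
    rw [← mul_assoc, mul_inv_cancel₀ (ne_of_gt hc), one_mul] at this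
    linarith
  have hN_one : ∀ c : ℝ, N (c • (1 : NCPoly n)) = c := by
    intro c
    have hset : S (c • (1 : NCPoly n)) = Set.Ici c := by
      ext t
      simp only [S, Set.mem_setOf_eq, Set.mem_Ici]
      constructor
      · intro h
        by_contra hlt
        push_neg at hlt
        have : t • (1 : NCPoly n) - c • 1 = (t - c) • 1 := by module
        rw [this] at h
        exact coneC_no_neg_one hG hf harch hfM (by linarith) h
      · intro h
        have : t • (1 : NCPoly n) - c • 1 = (t - c) • 1 := by module
        rw [this]
        exact coneC_of_qm (qm_smul (by linarith) qm_one)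
    show sInf (S (c • (1 : NCPoly n))) = c
    rw [hset, csInf_Ici]
  -- the partial functional on span {1}
  set φ : NCPoly n →ₗ.[ℝ] ℝ :=
    LinearPMap.mkSpanSingleton (1 : NCPoly n) (1 : ℝ) one_ne_zero with hφ
  have hφle : ∀ x : φ.domain, φ x ≤ N x := by
    rintro ⟨x, hx⟩
    have hx' : x ∈ Submodule.span ℝ {(1 : NCPoly n)} := hx
    obtain ⟨c, rfl⟩ := Submodule.mem_span_singleton.mp hx'
    have : φ ⟨c • 1, hx⟩ = c • (1 : ℝ) := LinearPMap.mkSpanSingleton'_apply _ _ _ c _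
    rw [this, hN_one c]
    simp
  obtain ⟨L, hLext, hLle⟩ := exists_extension_of_le_sublinear φ N hN_hom hN_add hφle
  have hL1 : L 1 = 1 := by
    have h1mem : (1 : NCPoly n) ∈ φ.domain := Submodule.mem_span_singleton_self _
    have := hLext ⟨1, h1mem⟩
    rw [this]
    exact LinearPMap.mkSpanSingleton'_apply_self _ _ _ _
  have hLC : ∀ w ∈ ConeC G f, 0 ≤ L w := by
    intro w hw
    have h0 : (0 : ℝ) ∈ S (-w) := by
      show (0 : ℝ) • (1 : NCPoly n) - -w ∈ ConeC G f
      have : (0 : ℝ) • (1 : NCPoly n) - -w = w := by module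
      rw [this]; exact hw
    have := (hLle (-w)).trans (hN_le h0)
    rw [map_neg] at this
    linarith
  refine ⟨L, hL1, fun m hm => hLC m (coneC_of_qm hm), ?_, ?_⟩
  · have := hLC (-f) coneC_neg_f
    rw [map_neg] at this; linarith
  · intro v
    have ha : ncStar (ncStar v - v) = -(ncStar v - v) := by
      rw [ncStar_sub, ncStar_ncStar]; abel
    have h1 := hLC _ (coneC_antisym (f := f) ha)
    have ha' : ncStar (-(ncStar v - v)) = -(-(ncStar v - v)) := by
      rw [ncStar_neg, ha, neg_neg]
    have h2 := hLC _ (coneC_antisym (f := f) ha')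
    rw [map_neg] at h2
    have h3 : L (ncStar v - v) = 0 := le_antisymm (by linarith) h1
    rw [map_sub] at h3
    linarith

end Sep2

section GNS
variable {n : ℕ} {G : Finset (NCPoly n)}

lemma ncStar_X (i : Fin n) : ncStar (ncX i) = ncX i := by
  show ncStar (MonoidAlgebra.single (FreeMonoid.of i) 1 : NCPoly n) = _
  rw [show ncStar (MonoidAlgebra.single (FreeMonoid.of i) 1 : NCPoly n)
    = MonoidAlgebra.single (FreeMonoid.of i).reverse 1 from ncStar_single _ _,
    FreeMonoid.reverse_of]
  rfl

/-- The GNS construction. -/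
lemma gns_exists
    (harch : ∀ q : NCPoly n, ∃ R : ℕ, 0 < R ∧
        (R : ℝ) • (1 : NCPoly n) - ncStar q * q ∈ QModule G)
    (L : NCPoly n →ₗ[ℝ] ℝ) (hL1 : L 1 = 1) (hLM : ∀ m ∈ QModule G, 0 ≤ L m)
    (hLstar : ∀ v, L (ncStar v) = L v) :
    ∃ (H : Type) (_i1 : NormedAddCommGroup H) (_i2 : InnerProductSpace ℝ H)
      (_i3 : CompleteSpace H) (A : Fin n → H →L[ℝ] H) (ξ : H),
      (∀ i, IsSelfAdjoint (A i)) ∧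
      (∀ g ∈ G, ∀ v : H, 0 ≤ (inner ℝ (ncEvalOp A g v) v : ℝ)) ∧ ξ ≠ 0 ∧
      ∀ q : NCPoly n, (inner ℝ (ncEvalOp A q ξ) ξ : ℝ) = L q := by
  classical
  -- the bilinear form ⟪p,q⟫ = L (q⋆ p)
  set Φ : NCPoly n →ₗ[ℝ] NCPoly n →ₗ[ℝ] ℝ := LinearMap.mk₂ ℝ (fun p q => L (ncStar q * p))
    (fun p p' q => by
      show L (ncStar q * (p + p')) = L (ncStar q * p) + L (ncStar q * p')
      rw [mul_add, map_add])
    (fun c p q => by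
      show L (ncStar q * (c • p)) = c • L (ncStar q * p)
      rw [mul_smul_comm, map_smul])
    (fun p q q' => by
      show L (ncStar (q + q') * p) = L (ncStar q * p) + L (ncStar q' * p)
      rw [ncStar_add, add_mul, map_add])
    (fun c p q => by
      show L (ncStar (c • q) * p) = c • L (ncStar q * p)
      rw [ncStar_smul, smul_mul_assoc, map_smul]) with hΦdef
  have hΦ_apply : ∀ p q, Φ p q = L (ncStar q * p) := fun _ _ => rfl
  have hΦ_symm : ∀ p q, Φ p q = Φ q p := by
    intro p q
    rw [hΦ_apply, hΦ_apply]
    conv_lhs => rw [← hLstar (ncStar q * p)]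
    rw [ncStar_mul, ncStar_ncStar]
  have hΦ_pos : ∀ p, 0 ≤ Φ p p := fun p => hLM _ (qm_sq p)
  -- Cauchy–Schwarz for the positive semidefinite form Φ
  have hCS : ∀ p q, Φ p q * Φ p q ≤ Φ p p * Φ q q := by
    intro p q
    have h := discrim_le_zero (a := Φ q q) (b := 2 * Φ p q) (c := Φ p p) (fun x => by
      have h0 := hΦ_pos (p + x • q)
      have : Φ (p + x • q) (p + x • q)
          = Φ q q * (x * x) + 2 * Φ p q * x + Φ p p := by
        simp only [map_add, map_smul, LinearMap.add_apply, LinearMap.smul_apply,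
          smul_eq_mul]
        rw [hΦ_symm q p]
        ring
      linarith [this ▸ h0])
    rw [discrim] at h
    nlinarith [h]
  have hΦ_null : ∀ p, Φ p p = 0 → ∀ q, Φ p q = 0 := by
    intro p hp q
    have := hCS p q
    rw [hp, zero_mul] at this
    nlinarith [this]
  -- null space
  set K : Submodule ℝ (NCPoly n) :=
    { carrier := {p | ∀ q, Φ p q = 0}
      add_mem' := fun {a b} ha hb q => by
        rw [map_add, LinearMap.add_apply, ha q, hb q, add_zero]
      zero_mem' := fun q => by rw [map_zero, LinearMap.zero_apply]
      smul_mem' := fun c a ha q => by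
        rw [map_smul, LinearMap.smul_apply, ha q, smul_zero] } with hKdef
  have hK_mem : ∀ p, p ∈ K ↔ ∀ q, Φ p q = 0 := fun p => Iff.rfl
  -- quotient
  set Q := NCPoly n ⧸ K with hQdef
  set π : NCPoly n →ₗ[ℝ] Q := K.mkQ with hπdef
  have hπsurj : Function.Surjective π := Submodule.mkQ_surjective K
  -- descend Φ to Q
  have hkill : ∀ p : NCPoly n, ∀ k ∈ K, Φ p k = 0 := by
    intro p k hk
    rw [hΦ_symm]; exact hk p
  set Φ₁ : NCPoly n →ₗ[ℝ] (Q →ₗ[ℝ] ℝ) :=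
    { toFun := fun p => K.liftQ (Φ p) (fun k hk => hkill p k hk)
      map_add' := fun p p' => by
        refine LinearMap.ext fun x => ?_
        obtain ⟨q, rfl⟩ := hπsurj x
        show Φ (p + p') q = Φ p q + Φ p' q
        rw [map_add, LinearMap.add_apply]
      map_smul' := fun c p => by
        refine LinearMap.ext fun x => ?_
        obtain ⟨q, rfl⟩ := hπsurj x
        show Φ (c • p) q = c • Φ p q
        rw [map_smul, LinearMap.smul_apply] } with hΦ₁def
  set Φ₂ : Q →ₗ[ℝ] (Q →ₗ[ℝ] ℝ) := K.liftQ Φ₁ (fun k hk => by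
      refine LinearMap.ext fun x => ?_
      obtain ⟨q, rfl⟩ := hπsurj x
      have : Φ₁ k (π q) = Φ k q := rfl
      rw [this, hk q]; rfl) with hΦ₂def
  have hΦ₂_apply : ∀ p q : NCPoly n, Φ₂ (π p) (π q) = Φ p q := fun _ _ => rfl
  -- inner product space structure on Q
  letI : Inner ℝ Q := ⟨fun x y => Φ₂ x y⟩
  have hinner : ∀ p q : NCPoly n, (inner ℝ (π p) (π q) : ℝ) = Φ p q := fun _ _ => rfl
  set core : InnerProductSpace.Core ℝ Q :=
    { inner := fun x y => Φ₂ x y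
      conj_inner_symm := by
        intro x y
        obtain ⟨p, rfl⟩ := hπsurj x
        obtain ⟨q, rfl⟩ := hπsurj y
        show Φ q p = Φ p q
        exact hΦ_symm q p
      re_inner_nonneg := by
        intro x
        obtain ⟨p, rfl⟩ := hπsurj x
        exact hΦ_pos p
      add_left := fun x y z => by
        show Φ₂ (x + y) z = Φ₂ x z + Φ₂ y z
        rw [map_add, LinearMap.add_apply]
      smul_left := fun x y r => by
        show Φ₂ (r • x) y = r * Φ₂ x y
        rw [map_smul, LinearMap.smul_apply, smul_eq_mul]
      definite := by
        intro x hx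
        obtain ⟨p, rfl⟩ := hπsurj x
        have hp : Φ p p = 0 := hx
        have : p ∈ K := (hK_mem p).mpr (hΦ_null p hp)
        show K.mkQ p = 0
        rw [Submodule.mkQ_apply]
        exact (Submodule.Quotient.mk_eq_zero K).mpr this } with hcore
  letI nacg : NormedAddCommGroup Q := core.toNormedAddCommGroup
  letI ips : InnerProductSpace ℝ Q := InnerProductSpace.ofCore core.toCore
  have hnormsq : ∀ x : Q, ‖x‖ ^ 2 = (inner ℝ x x : ℝ) := fun x =>
    real_inner_self_eq_norm_sq x ▸ rfl
  -- the completion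
  set H := UniformSpace.Completion Q with hHdef
  set ι : Q →L[ℝ] H := UniformSpace.Completion.toComplL with hιdef
  have hιdense : DenseRange (ι : Q → H) := UniformSpace.Completion.denseRange_coe
  have hιui : IsUniformInducing (ι : Q → H) := UniformSpace.Completion.isUniformInducing_coe Q
  have hι_inner : ∀ x y : Q, (inner ℝ (ι x) (ι y) : ℝ) = inner ℝ x y := fun x y =>
    UniformSpace.Completion.inner_coe x y
  -- left multiplication operators descend to Q
  have hmul_descend : ∀ h : NCPoly n, K ≤ K.comap (LinearMap.mulLeft ℝ h) := by
    intro h p hp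
    have hmem : ∀ q, Φ (h * p) q = 0 := by
      intro q
      have he : Φ (h * p) q = Φ p (ncStar h * q) := by
        rw [hΦ_apply, hΦ_apply, ncStar_mul, ncStar_ncStar, mul_assoc]
      rw [he]
      exact hp _
    exact hmem
  set Mq : NCPoly n → (Q →ₗ[ℝ] Q) :=
    fun h => Submodule.mapQ K K (LinearMap.mulLeft ℝ h) (hmul_descend h) with hMqdef
  have hMq_apply : ∀ h p, Mq h (π p) = π (h * p) := fun h p => rfl
  -- norm bound for the generators
  have hbound : ∀ i : Fin n, ∃ R : ℝ, 0 ≤ R ∧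
      ∀ p, Φ (ncX i * p) (ncX i * p) ≤ R * Φ p p := by
    intro i
    obtain ⟨R, -, hR⟩ := harch (ncX i)
    refine ⟨R, by positivity, fun p => ?_⟩
    have h0 := hLM _ (qm_conj hR p)
    have hexp : ncStar p * ((R : ℝ) • (1 : NCPoly n) - ncStar (ncX i) * ncX i) * p
        = (R : ℝ) • (ncStar p * p) - ncStar (ncX i * p) * (ncX i * p) := by
      rw [ncStar_mul, ncStar_X]
      simp only [mul_sub, sub_mul, smul_mul_assoc, mul_smul_comm, mul_one, one_mul, mul_assoc]
    rw [hexp, map_sub, map_smul] at h0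
    have e1 : Φ (ncX i * p) (ncX i * p) = L (ncStar (ncX i * p) * (ncX i * p)) := hΦ_apply _ _
    have e2 : Φ p p = L (ncStar p * p) := hΦ_apply _ _
    rw [e1, e2]
    simpa using h0
  choose Rb hRb0 hRb using hbound
  -- continuous operators on Q
  have hex : ∀ i : Fin n, ∃ T : Q →L[ℝ] Q, ∀ p : NCPoly n, T (π p) = π (ncX i * p) := by
    intro i
    refine ⟨LinearMap.mkContinuous (Mq (ncX i)) (Real.sqrt (Rb i)) (fun x => ?_), fun p => ?_⟩
    · obtain ⟨p, rfl⟩ := hπsurj x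
      have h1 : ‖Mq (ncX i) (π p)‖ ^ 2 = Φ (ncX i * p) (ncX i * p) := by
        rw [hMq_apply, hnormsq]
        exact hinner _ _
      have h2 : ‖π p‖ ^ 2 = Φ p p := by rw [hnormsq]; exact hinner _ _
      have key : ‖Mq (ncX i) (π p)‖ ^ 2 ≤ (Real.sqrt (Rb i) * ‖π p‖) ^ 2 := by
        rw [mul_pow, Real.sq_sqrt (hRb0 i), h1, h2]
        exact hRb i p
      have hb : 0 ≤ Real.sqrt (Rb i) * ‖π p‖ := by positivity
      calc ‖Mq (ncX i) (π p)‖ = Real.sqrt (‖Mq (ncX i) (π p)‖ ^ 2) :=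
            (Real.sqrt_sq (norm_nonneg _)).symm
        _ ≤ Real.sqrt ((Real.sqrt (Rb i) * ‖π p‖) ^ 2) := Real.sqrt_le_sqrt key
        _ = Real.sqrt (Rb i) * ‖π p‖ := Real.sqrt_sq hb
    · exact hMq_apply _ _
  choose Aq hAq using hex
  -- extension to the completion
  set A : Fin n → H →L[ℝ] H :=
    fun i => ContinuousLinearMap.extend (ι.comp (Aq i)) ι with hAdef
  have hA_comm : ∀ i p, A i (ι (π p)) = ι (π (ncX i * p)) := by
    intro i p
    have h1 : A i (ι (π p)) = (ι.comp (Aq i)) (π p) :=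
      ContinuousLinearMap.extend_eq (ι.comp (Aq i)) hιdense hιui (π p)
    rw [h1, ContinuousLinearMap.comp_apply, hAq i p]
  have hι_coe : ∀ x : Q, ι x = (x : H) := fun x => rfl
  -- symmetry of the operators
  have hA_sym : ∀ (i : Fin n) (x y : H), (inner ℝ (A i x) y : ℝ) = inner ℝ x (A i y) := by
    intro i x y
    refine DenseRange.induction_on₂ hιdense ?_ ?_ x y
    · apply isClosed_eq
      · exact Continuous.inner ((A i).continuous.comp continuous_fst) continuous_snd
      · exact Continuous.inner continuous_fst ((A i).continuous.comp continuous_snd)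
    · intro a b
      obtain ⟨p, rfl⟩ := hπsurj a
      obtain ⟨q, rfl⟩ := hπsurj b
      rw [hA_comm]
      conv_rhs => rw [hA_comm]
      simp only [hι_coe]
      rw [UniformSpace.Completion.inner_coe, UniformSpace.Completion.inner_coe]
      show Φ (ncX i * p) q = Φ p (ncX i * q)
      rw [hΦ_apply, hΦ_apply, ncStar_mul, ncStar_X, mul_assoc]
  have hA_selfadj : ∀ i, IsSelfAdjoint (A i) :=
    fun i => ContinuousLinearMap.isSelfAdjoint_iff_isSymmetric.mpr (fun x y => hA_sym i x y)
  -- evaluation of nc polynomials on vectors coming from Q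
  have hEvalX : ∀ i, ncEvalOp A (ncX i) = A i := by
    intro i
    show MonoidAlgebra.lift ℝ _ (FreeMonoid (Fin n)) (FreeMonoid.lift A)
      (MonoidAlgebra.of ℝ (FreeMonoid (Fin n)) (FreeMonoid.of i)) = A i
    rw [MonoidAlgebra.lift_of, FreeMonoid.lift_eval_of]
  have hEval : ∀ (q p : NCPoly n), ncEvalOp A q (ι (π p)) = ι (π (q * p)) := by
    intro q
    induction q using MonoidAlgebra.induction_linear with
    | zero =>
      intro p
      rw [map_zero, zero_mul, map_zero, map_zero, ContinuousLinearMap.zero_apply]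
    | add a b ha hb =>
      intro p
      rw [map_add, add_mul, map_add, map_add, ContinuousLinearMap.add_apply, ha p, hb p]
    | single w r =>
      have hw : ∀ p : NCPoly n, ncEvalOp A (MonoidAlgebra.single w (1 : ℝ)) (ι (π p))
          = ι (π (MonoidAlgebra.single w (1 : ℝ) * p)) := by
        induction w using FreeMonoid.recOn with
        | one =>
          intro p
          rw [show (MonoidAlgebra.single (1 : FreeMonoid (Fin n)) (1 : ℝ)) = (1 : NCPoly n)
            from rfl, map_one, one_mul, ContinuousLinearMap.one_apply]
        | of_mul x xs hxs =>
          intro p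
          have hsplit : (MonoidAlgebra.single (FreeMonoid.of x * xs) (1 : ℝ) : NCPoly n)
              = ncX x * MonoidAlgebra.single xs 1 := by
            rw [show (ncX x : NCPoly n) = MonoidAlgebra.single (FreeMonoid.of x) 1 from rfl,
              MonoidAlgebra.single_mul_single, one_mul]
          rw [hsplit, map_mul, ContinuousLinearMap.mul_apply, hxs p, hEvalX, hA_comm,
            mul_assoc]
      intro p
      have hsm : (MonoidAlgebra.single w r : NCPoly n) = r • (MonoidAlgebra.single w (1 : ℝ)) := by
        rw [MonoidAlgebra.smul_single', mul_one]
      rw [hsm, map_smul, ContinuousLinearMap.smul_apply, hw p, smul_mul_assoc, map_smul,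
        map_smul]
  -- the cyclic vector
  set ξ : H := ι (π 1) with hξdef
  have hinnerξ : ∀ q : NCPoly n, (inner ℝ (ncEvalOp A q ξ) ξ : ℝ) = L q := by
    intro q
    rw [hξdef, hEval q 1, mul_one]
    simp only [hι_coe]
    rw [UniformSpace.Completion.inner_coe]
    show Φ q 1 = L q
    rw [hΦ_apply, ncStar_one, one_mul]
  refine ⟨H, inferInstance, inferInstance, inferInstance, A, ξ, hA_selfadj, ?_, ?_, hinnerξ⟩
  · -- positivity of the generators
    intro g hg v
    refine DenseRange.induction_on hιdense v ?_ ?_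
    · apply isClosed_le continuous_const
      exact Continuous.inner ((ncEvalOp A g).continuous.comp continuous_id) continuous_id
    · intro a
      obtain ⟨p, rfl⟩ := hπsurj a
      rw [hEval g p]
      simp only [hι_coe]
      rw [UniformSpace.Completion.inner_coe]
      show (0 : ℝ) ≤ Φ (g * p) p
      rw [hΦ_apply, ← mul_assoc]
      exact hLM _ (qm_term (Or.inl hg) p)
  · -- ξ ≠ 0
    intro h0
    have h1 : (inner ℝ ξ ξ : ℝ) = 1 := by
      have := hinnerξ 1
      rwa [map_one, ContinuousLinearMap.one_apply, hL1] at this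
    rw [h0, inner_zero_left] at h1
    norm_num at h1

end GNS

/-- **nc Putinar Positivstellensatz.** Suppose `Q(𝔤)` is Archimedean and
`f` is symmetric. If `f(A)` is positive definite at every tuple of bounded self-adjoint
operators on a Hilbert space making each `g ∈ 𝔤` positive, then `f ∈ Q(𝔤)`. -/
theorem nc_putinar {n : ℕ} (G : Finset (NCPoly n)) (hG : ∀ g ∈ G, ncStar g = g)
    (harch : ∀ q : NCPoly n, ∃ R : ℕ, 0 < R ∧
        (R : ℝ) • (1 : NCPoly n) - ncStar q * q ∈ QModule G)
    (f : NCPoly n) (hf : ncStar f = f)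
    (hpos : ∀ (H : Type) [NormedAddCommGroup H] [InnerProductSpace ℝ H] [CompleteSpace H]
      (A : Fin n → (H →L[ℝ] H)), (∀ i, IsSelfAdjoint (A i)) →
      (∀ g ∈ G, ∀ v : H, 0 ≤ (inner ℝ (ncEvalOp A g v) v : ℝ)) →
      ∀ v : H, v ≠ 0 → 0 < (inner ℝ (ncEvalOp A f v) v : ℝ)) :
    f ∈ QModule G := by
  by_contra hfM
  obtain ⟨L, hL1, hLM, hLf, hLstar⟩ := exists_functional hG hf harch hfM
  obtain ⟨H, i1, i2, i3, A, ξ, hsa, hgpos, hξ, hq⟩ := gns_exists harch L hL1 hLM hLstar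
  have hlt := @hpos H i1 i2 i3 A hsa hgpos ξ hξ
  rw [hq f] at hlt
  linarith
end

section
/- (Tsirelson bound for the CHSH inequality.) Let X₁, X₂, Y₁, Y₂ be real symmetric matrices of a common size satisfying Xᵢ² = I, Yⱼ² = I, and XᵢYⱼ = YⱼXᵢ for all i, j ∈ {1,2}. Then for every unit vector v, vᵀ (X₁Y₁ + X₁Y₂ + X₂Y₁ − X₂Y₂) v ≤ 2√2; moreover, this bound 2√2 is attained by some such matrices and unit vector. -/
open scoped Matrix

section CHSHAux

noncomputable section

def mX0 : Matrix (Fin 4) (Fin 4) ℝ := !![0,0,1,0; 0,0,0,1; 1,0,0,0; 0,1,0,0]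
def mX1 : Matrix (Fin 4) (Fin 4) ℝ := !![1,0,0,0; 0,1,0,0; 0,0,-1,0; 0,0,0,-1]
def mB0 : Matrix (Fin 4) (Fin 4) ℝ := !![1,1,0,0; 1,-1,0,0; 0,0,1,1; 0,0,1,-1]
def mB1 : Matrix (Fin 4) (Fin 4) ℝ := !![-1,1,0,0; 1,1,0,0; 0,0,-1,1; 0,0,1,1]

set_option maxHeartbeats 1000000

lemma mX0_symm : mX0.IsSymm := by
  ext i j; fin_cases i <;> fin_cases j <;> simp [mX0, Matrix.IsSymm, Matrix.transpose_apply, Matrix.vecHead, Matrix.vecTail]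
lemma mX1_symm : mX1.IsSymm := by
  ext i j; fin_cases i <;> fin_cases j <;> simp [mX1, Matrix.IsSymm, Matrix.transpose_apply, Matrix.vecHead, Matrix.vecTail]
lemma mB0_symm : mB0.IsSymm := by
  ext i j; fin_cases i <;> fin_cases j <;> simp [mB0, Matrix.IsSymm, Matrix.transpose_apply, Matrix.vecHead, Matrix.vecTail]
lemma mB1_symm : mB1.IsSymm := by
  ext i j; fin_cases i <;> fin_cases j <;> simp [mB1, Matrix.IsSymm, Matrix.transpose_apply, Matrix.vecHead, Matrix.vecTail]

lemma mX0_sq : mX0 * mX0 = 1 := by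
  ext i j; fin_cases i <;> fin_cases j <;>
    norm_num [mX0, Matrix.mul_apply, Fin.sum_univ_four, Matrix.vecHead, Matrix.vecTail,
      Matrix.one_apply, Fin.ext_iff, Matrix.cons_val_two, Matrix.cons_val_three]
lemma mX1_sq : mX1 * mX1 = 1 := by
  ext i j; fin_cases i <;> fin_cases j <;>
    norm_num [mX1, Matrix.mul_apply, Fin.sum_univ_four, Matrix.vecHead, Matrix.vecTail,
      Matrix.one_apply, Fin.ext_iff, Matrix.cons_val_two, Matrix.cons_val_three]
lemma mB0_sq : mB0 * mB0 = (2:ℝ) • 1 := by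
  ext i j; fin_cases i <;> fin_cases j <;>
    norm_num [mB0, Matrix.mul_apply, Fin.sum_univ_four, Matrix.vecHead, Matrix.vecTail,
      Matrix.one_apply, Fin.ext_iff, Matrix.cons_val_two, Matrix.cons_val_three]
lemma mB1_sq : mB1 * mB1 = (2:ℝ) • 1 := by
  ext i j; fin_cases i <;> fin_cases j <;>
    norm_num [mB1, Matrix.mul_apply, Fin.sum_univ_four, Matrix.vecHead, Matrix.vecTail,
      Matrix.one_apply, Fin.ext_iff, Matrix.cons_val_two, Matrix.cons_val_three]

lemma comm00 : mX0 * mB0 = mB0 * mX0 := by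
  ext i j; fin_cases i <;> fin_cases j <;>
    norm_num [mX0, mB0, Matrix.mul_apply, Fin.sum_univ_four, Matrix.vecHead, Matrix.vecTail,
      Matrix.cons_val_two, Matrix.cons_val_three]
lemma comm01 : mX0 * mB1 = mB1 * mX0 := by
  ext i j; fin_cases i <;> fin_cases j <;>
    norm_num [mX0, mB1, Matrix.mul_apply, Fin.sum_univ_four, Matrix.vecHead, Matrix.vecTail,
      Matrix.cons_val_two, Matrix.cons_val_three]
lemma comm10 : mX1 * mB0 = mB0 * mX1 := by
  ext i j; fin_cases i <;> fin_cases j <;>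
    norm_num [mX1, mB0, Matrix.mul_apply, Fin.sum_univ_four, Matrix.vecHead, Matrix.vecTail,
      Matrix.cons_val_two, Matrix.cons_val_three]
lemma comm11 : mX1 * mB1 = mB1 * mX1 := by
  ext i j; fin_cases i <;> fin_cases j <;>
    norm_num [mX1, mB1, Matrix.mul_apply, Fin.sum_univ_four, Matrix.vecHead, Matrix.vecTail,
      Matrix.cons_val_two, Matrix.cons_val_three]

lemma nsum : mX0 * mB0 + mX0 * mB1 + mX1 * mB0 - mX1 * mB1
    = !![2,0,0,2; 0,-2,2,0; 0,2,-2,0; 2,0,0,2] := by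
  ext i j; fin_cases i <;> fin_cases j <;>
    norm_num [mX0, mX1, mB0, mB1, Matrix.mul_apply, Fin.sum_univ_four,
      Matrix.vecHead, Matrix.vecTail, Matrix.cons_val_two, Matrix.cons_val_three]

end
end CHSHAux

/-- **Tsirelson bound for CHSH.** For real symmetric matrices
`X₁, X₂, Y₁, Y₂` of a common size with `Xᵢ² = I`, `Yⱼ² = I` and `XᵢYⱼ = YⱼXᵢ`, every unit
vector `v` satisfies `vᵀ(X₁Y₁ + X₁Y₂ + X₂Y₁ - X₂Y₂)v ≤ 2√2`, and the bound is attained. -/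
theorem chsh_tsirelson_bound :
    (∀ (r : ℕ) (X Y : Fin 2 → Matrix (Fin r) (Fin r) ℝ),
      (∀ i, (X i).IsSymm) → (∀ j, (Y j).IsSymm) →
      (∀ i, X i ^ 2 = 1) → (∀ j, Y j ^ 2 = 1) →
      (∀ i j, X i * Y j = Y j * X i) →
      ∀ v : Fin r → ℝ, v ⬝ᵥ v = 1 →
        v ⬝ᵥ (X 0 * Y 0 + X 0 * Y 1 + X 1 * Y 0 - X 1 * Y 1).mulVec v ≤
          2 * Real.sqrt 2)
    ∧ (∃ (r : ℕ) (X Y : Fin 2 → Matrix (Fin r) (Fin r) ℝ) (v : Fin r → ℝ),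
      (∀ i, (X i).IsSymm) ∧ (∀ j, (Y j).IsSymm) ∧
      (∀ i, X i ^ 2 = 1) ∧ (∀ j, Y j ^ 2 = 1) ∧
      (∀ i j, X i * Y j = Y j * X i) ∧ v ⬝ᵥ v = 1 ∧
      v ⬝ᵥ (X 0 * Y 0 + X 0 * Y 1 + X 1 * Y 0 - X 1 * Y 1).mulVec v =
        2 * Real.sqrt 2) := by
  constructor
  · intro r X Y hXs hYs hX2 hY2 hcomm v hv
    have key : ∀ (M N : Matrix (Fin r) (Fin r) ℝ), M.IsSymm →
        v ⬝ᵥ (M * N).mulVec v = M.mulVec v ⬝ᵥ N.mulVec v := by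
      intro M N hM
      rw [← Matrix.mulVec_mulVec, Matrix.dotProduct_mulVec, ← Matrix.mulVec_transpose, hM]
    set s := Real.sqrt 2 with hsdef
    have hs : s * s = 2 := Real.mul_self_sqrt (by norm_num)
    have hspos : 0 < s := Real.sqrt_pos.mpr (by norm_num)
    set a0 := (X 0).mulVec v
    set a1 := (X 1).mulVec v
    set b0 := (Y 0).mulVec v
    set b1 := (Y 1).mulVec v
    have ha0 : a0 ⬝ᵥ a0 = 1 := by
      have := key (X 0) (X 0) (hXs 0)
      rw [← this, ← pow_two, hX2 0, Matrix.one_mulVec, hv]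
    have ha1 : a1 ⬝ᵥ a1 = 1 := by
      have := key (X 1) (X 1) (hXs 1)
      rw [← this, ← pow_two, hX2 1, Matrix.one_mulVec, hv]
    have hb0 : b0 ⬝ᵥ b0 = 1 := by
      have := key (Y 0) (Y 0) (hYs 0)
      rw [← this, ← pow_two, hY2 0, Matrix.one_mulVec, hv]
    have hb1 : b1 ⬝ᵥ b1 = 1 := by
      have := key (Y 1) (Y 1) (hYs 1)
      rw [← this, ← pow_two, hY2 1, Matrix.one_mulVec, hv]
    have hP : (0:ℝ) ≤ ((a0 + a1) - s • b0) ⬝ᵥ ((a0 + a1) - s • b0) :=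
      Finset.sum_nonneg fun i _ => mul_self_nonneg _
    have hQ : (0:ℝ) ≤ ((a0 - a1) - s • b1) ⬝ᵥ ((a0 - a1) - s • b1) :=
      Finset.sum_nonneg fun i _ => mul_self_nonneg _
    have expand : v ⬝ᵥ (X 0 * Y 0 + X 0 * Y 1 + X 1 * Y 0 - X 1 * Y 1).mulVec v
        = a0 ⬝ᵥ b0 + a0 ⬝ᵥ b1 + a1 ⬝ᵥ b0 - a1 ⬝ᵥ b1 := by
      rw [Matrix.sub_mulVec, Matrix.add_mulVec, Matrix.add_mulVec,
        dotProduct_sub, dotProduct_add, dotProduct_add,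
        key _ _ (hXs 0), key _ _ (hXs 0), key _ _ (hXs 1), key _ _ (hXs 1)]
    rw [expand]
    simp only [dotProduct_sub, sub_dotProduct, dotProduct_add,
      add_dotProduct, dotProduct_smul, smul_dotProduct,
      smul_eq_mul] at hP hQ
    have hc01 : a0 ⬝ᵥ a1 = a1 ⬝ᵥ a0 := dotProduct_comm _ _
    have hc1 : b0 ⬝ᵥ a0 = a0 ⬝ᵥ b0 := dotProduct_comm _ _
    have hc2 : b0 ⬝ᵥ a1 = a1 ⬝ᵥ b0 := dotProduct_comm _ _
    have hc3 : b1 ⬝ᵥ a0 = a0 ⬝ᵥ b1 := dotProduct_comm _ _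
    have hc4 : b1 ⬝ᵥ a1 = a1 ⬝ᵥ b1 := dotProduct_comm _ _
    nlinarith [hP, hQ, hspos, hs, mul_pos hspos hspos]
  · set c : ℝ := (Real.sqrt 2)⁻¹ with hcdef
    have hs : Real.sqrt 2 * Real.sqrt 2 = 2 := Real.mul_self_sqrt (by norm_num)
    have hsne : Real.sqrt 2 ≠ 0 := by positivity
    have hc : c * c = 1/2 := by rw [hcdef, ← mul_inv, hs]; norm_num
    refine ⟨4, ![mX0, mX1], ![c • mB0, c • mB1], ![c, 0, 0, c], ?_, ?_, ?_, ?_, ?_, ?_, ?_⟩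
    · intro i; fin_cases i
      · exact mX0_symm
      · exact mX1_symm
    · intro j; fin_cases j
      · exact mB0_symm.smul c
      · exact mB1_symm.smul c
    · intro i; rw [pow_two]; fin_cases i
      · exact mX0_sq
      · exact mX1_sq
    · intro j; rw [pow_two]; fin_cases j
      · show (c • mB0) * (c • mB0) = 1
        rw [smul_mul_smul_comm, mB0_sq, smul_smul, hc]
        norm_num
      · show (c • mB1) * (c • mB1) = 1
        rw [smul_mul_smul_comm, mB1_sq, smul_smul, hc]
        norm_num
    · intro i j; fin_cases i <;> fin_cases j
      · show mX0 * (c • mB0) = (c • mB0) * mX0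
        rw [Matrix.mul_smul, Matrix.smul_mul, comm00]
      · show mX0 * (c • mB1) = (c • mB1) * mX0
        rw [Matrix.mul_smul, Matrix.smul_mul, comm01]
      · show mX1 * (c • mB0) = (c • mB0) * mX1
        rw [Matrix.mul_smul, Matrix.smul_mul, comm10]
      · show mX1 * (c • mB1) = (c • mB1) * mX1
        rw [Matrix.mul_smul, Matrix.smul_mul, comm11]
    · show c * c + (0*0 + (0*0 + (c*c + 0))) = 1
      rw [hc]; norm_num
    · have key : (![mX0, mX1] 0 : Matrix (Fin 4) (Fin 4) ℝ) * (![c • mB0, c • mB1] 0)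
          + ![mX0, mX1] 0 * ![c • mB0, c • mB1] 1
          + ![mX0, mX1] 1 * ![c • mB0, c • mB1] 0
          - ![mX0, mX1] 1 * ![c • mB0, c • mB1] 1
          = c • !![2,0,0,2; 0,-2,2,0; 0,2,-2,0; 2,0,0,2] := by
        simp only [Matrix.cons_val_zero, Matrix.cons_val_one, Matrix.head_cons,
          Matrix.mul_smul]
        rw [← smul_add, ← smul_add, ← smul_sub, nsum]
      rw [key]
      show (![c,0,0,c] : Fin 4 → ℝ) ⬝ᵥ (c • !![2,0,0,2; 0,-2,2,0; 0,2,-2,0; 2,0,0,2]).mulVec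
        ![c,0,0,c] = 2 * Real.sqrt 2
      have : ∀ x : ℝ, x = x := fun x => rfl
      simp only [Matrix.smul_mulVec, dotProduct_smul]
      rw [show ((!![2,0,0,2; 0,-2,2,0; 0,2,-2,0; 2,0,0,2] : Matrix (Fin 4) (Fin 4) ℝ).mulVec
          ![c,0,0,c]) = ![4*c, 0, 0, 4*c] from ?_]
      · show c • ((c * (4*c)) + (0*0 + (0*0 + (c*(4*c) + 0)))) = 2 * Real.sqrt 2
        have : c • (c * (4*c) + (0*0 + (0*0 + (c*(4*c) + 0)))) = 8 * (c*c) * c := by simp only [smul_eq_mul]; ring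
        rw [this]
        rw [hc, hcdef]
        field_simp
        nlinarith [hs]
      · ext i; fin_cases i <;>
          norm_num [Matrix.mulVec, dotProduct, Fin.sum_univ_four,
            Matrix.vecHead, Matrix.vecTail, Matrix.cons_val_two, Matrix.cons_val_three] <;> ring
end
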